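/- arXiv:1807.03496 — 9 statements merged into one kernel-verified Lean document; each statement's English description precedes it below -/
import Mathlib

section
/- Let d ∈ {2,3}, let x_1,…,x_N be pairwise distinct points in ℝ^d with particle volumes V_1,…,V_N > 0, let w be a reference weight function with support radius r₀, h > 0, and let Δt, ν > 0. Partition the index set {1,…,N} into Λ_fl ∪ Λ_sf ∪ Λ_wl and let M be the number of indices in Λ_fl ∪ Λ_sf, enumerated as 1,…,M. Define the M×M real matrix A by A_ii = 1 + Δt·ν·Σ_{l=1}^N V_l C_il and A_ij = −Δt·ν·V_j C_ij for i ≠ j, where C_ij := −2 ẇ_h(|x_i − x_j|)/|x_i − x_j| for i ≠ j and C_ii := 0. Then A is strictly diagonally dominant (|A_ii| − Σ_{j≠i}|A_ij| ≥ 1 for every i ≤ M) and hence invertible; consequently the implicit prediction step has a unique solution. -/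
open MeasureTheory Finset
open scoped BigOperators RealInnerProductSpace

noncomputable section

namespace ISPH

/-- Points of `ℝ^d`. -/
abbrev Pt (d : ℕ) := EuclideanSpace ℝ (Fin d)

/-- A reference weight function for dimension `d` with support radius `r₀`. -/
structure IsRefWeight (d : ℕ) (w : ℝ → ℝ) (r₀ : ℝ) : Prop where
  r0_pos : 0 < r₀
  smooth : ContDiffOn ℝ 2 w (Set.Ici 0)
  pos : ∀ r : ℝ, 0 < r → r < r₀ → 0 < w r
  eq_zero : ∀ r : ℝ, r₀ ≤ r → w r = 0
  deriv_neg : ∀ r : ℝ, 0 < r → r < r₀ → deriv w r < 0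
  deriv_zero : deriv w 0 = 0
  deriv_eq_zero : ∀ r : ℝ, r₀ ≤ r → deriv w r = 0
  unity : (∫ y : Pt d, w ‖y‖) = 1

/-- The scaled weight function `w_h`. -/
def wh (d : ℕ) (h : ℝ) (w : ℝ → ℝ) : ℝ → ℝ := fun r => (h ^ d)⁻¹ * w (r / h)

/-- `ẇ_h`, the derivative of the scaled weight function. -/
def dwh (d : ℕ) (h : ℝ) (w : ℝ → ℝ) : ℝ → ℝ := deriv (wh d h w)

variable {d N : ℕ}

/-- `∇w_h(|x i − x j|)`; equal to `0` when `i = j`. -/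
def gradW (x : Fin N → Pt d) (dw : ℝ → ℝ) (i j : Fin N) : Pt d :=
  (dw ‖x i - x j‖ / ‖x i - x j‖) • (x i - x j)

/-- `C i j = −2 ẇ_h(|x_i − x_j|)/|x_i − x_j|` off the diagonal, `0` on it. -/
def Cmat (x : Fin N → Pt d) (dw : ℝ → ℝ) (i j : Fin N) : ℝ :=
  if i = j then 0 else -2 * dw ‖x i - x j‖ / ‖x i - x j‖

/-- Discrete divergence over `Λ`. -/
def dDiv (x : Fin N → Pt d) (V : Fin N → ℝ) (dw : ℝ → ℝ) (Λ : Finset (Fin N))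
    (φ : Fin N → Pt d) (i : Fin N) : ℝ :=
  ∑ j ∈ Λ, V j * ⟪φ j + φ i, gradW x dw i j⟫

/-- Discrete gradient over `Λ`. -/
def dGrad (x : Fin N → Pt d) (V : Fin N → ℝ) (dw : ℝ → ℝ) (Λ : Finset (Fin N))
    (ψ : Fin N → ℝ) (i : Fin N) : Pt d :=
  ∑ j ∈ Λ, (V j * (ψ j - ψ i)) • gradW x dw i j

/-- Discrete Laplacian over `Λ` (for scalar- or vector-valued functions). -/
def dLap {F : Type*} [NormedAddCommGroup F] [NormedSpace ℝ F]
    (x : Fin N → Pt d) (V : Fin N → ℝ) (dw : ℝ → ℝ) (Λ : Finset (Fin N))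
    (φ : Fin N → F) (i : Fin N) : F :=
  (2 : ℝ) • ∑ j ∈ Λ.erase i,
    ((V j / ‖x i - x j‖) * ⟪‖x i - x j‖⁻¹ • (x i - x j), gradW x dw i j⟫) • (φ i - φ j)

/-- Discrete inner product over `Λ`. -/
def dInner {F : Type*} [NormedAddCommGroup F] [InnerProductSpace ℝ F]
    (V : Fin N → ℝ) (Λ : Finset (Fin N)) (φ ψ : Fin N → F) : ℝ :=
  ∑ i ∈ Λ, V i * ⟪φ i, ψ i⟫

/-- Square of the discrete `L²` norm over `Λ`. -/
def l2normSq {F : Type*} [NormedAddCommGroup F]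
    (V : Fin N → ℝ) (Λ : Finset (Fin N)) (φ : Fin N → F) : ℝ :=
  ∑ i ∈ Λ, V i * ‖φ i‖ ^ 2

/-- Discrete `L²` norm over `Λ`. -/
def l2norm {F : Type*} [NormedAddCommGroup F]
    (V : Fin N → ℝ) (Λ : Finset (Fin N)) (φ : Fin N → F) : ℝ :=
  Real.sqrt (l2normSq V Λ φ)

/-- Square of the discrete `H¹₀` seminorm over `Λ`. -/
def h1semiSq {F : Type*} [NormedAddCommGroup F]
    (x : Fin N → Pt d) (V : Fin N → ℝ) (dw : ℝ → ℝ) (Λ : Finset (Fin N))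
    (φ : Fin N → F) : ℝ :=
  ∑ i ∈ Λ, V i * ∑ j ∈ Λ.erase i,
    V j * (‖φ i - φ j‖ ^ 2 / ‖x i - x j‖) * |dw ‖x i - x j‖|

/-- Discrete `H¹₀` seminorm over `Λ`. -/
def h1semi {F : Type*} [NormedAddCommGroup F]
    (x : Fin N → Pt d) (V : Fin N → ℝ) (dw : ℝ → ℝ) (Λ : Finset (Fin N))
    (φ : Fin N → F) : ℝ :=
  Real.sqrt (h1semiSq x V dw Λ φ)

/-- Discrete `H₀⁻¹` seminorm over `Λ`. -/
def hm1semi {F : Type*} [NormedAddCommGroup F] [InnerProductSpace ℝ F]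
    (x : Fin N → Pt d) (V : Fin N → ℝ) (dw : ℝ → ℝ) (Λ : Finset (Fin N))
    (φ : Fin N → F) : ℝ :=
  sSup { r : ℝ | ∃ χ : Fin N → F, h1semi x V dw Λ χ ≠ 0 ∧
    r = dInner V Λ φ χ / h1semi x V dw Λ χ }

/-- There is a chain from `i` ending in `target`, with all indices before the last
one in `inter`, and consecutive distances strictly between `0` and `R`. -/
def Chain (x : Fin N → Pt d) (R : ℝ) (inter target : Finset (Fin N)) (i : Fin N) : Prop :=
  ∃ (ζ : ℕ) (c : ℕ → Fin N), c 0 = i ∧ (∀ l < ζ, c l ∈ inter) ∧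
    (∀ l < ζ, 0 < ‖x (c l) - x (c (l + 1))‖ ∧ ‖x (c l) - x (c (l + 1))‖ < R) ∧
    c ζ ∈ target

end ISPH

open ISPH


lemma dwh_nonpos {d : ℕ} {w : ℝ → ℝ} {r₀ h : ℝ} (hw : IsRefWeight d w r₀)
    (hh : 0 < h) {r : ℝ} (hr : 0 < r) : dwh d h w r ≤ 0 := by
  have hs : 0 < r / h := div_pos hr hh
  have hdw : deriv w (r / h) ≤ 0 := by
    rcases le_or_gt r₀ (r / h) with h1 | h1
    · exact le_of_eq (hw.deriv_eq_zero _ h1)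
    · exact le_of_lt (hw.deriv_neg _ hs h1)
  have hdiff : DifferentiableAt ℝ w (r / h) :=
    (hw.smooth.contDiffAt (Ici_mem_nhds hs)).differentiableAt (by norm_num)
  have h1 : HasDerivAt (fun s : ℝ => w (s / h)) (deriv w (r / h) * (1 / h)) r := by
    have := (hdiff.hasDerivAt).comp r ((hasDerivAt_id r).div_const h)
    exact this
  have h2 : HasDerivAt (wh d h w) ((h ^ d)⁻¹ * (deriv w (r / h) * (1 / h))) r :=
    h1.const_mul _
  rw [dwh, h2.deriv]
  have h3 : (0:ℝ) ≤ (h ^ d)⁻¹ := by positivity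
  have h4 : (0:ℝ) ≤ 1 / h := by positivity
  have h5 : deriv w (r/h) * (1/h) ≤ 0 := mul_nonpos_iff.mpr (Or.inr ⟨hdw, h4⟩)
  exact mul_nonpos_iff.mpr (Or.inl ⟨h3, h5⟩)

lemma Cmat_nonneg {d N : ℕ} {x : Fin N → Pt d} (hx : Function.Injective x)
    {w : ℝ → ℝ} {r₀ h : ℝ} (hw : IsRefWeight d w r₀) (hh : 0 < h) (i j : Fin N) :
    0 ≤ Cmat x (dwh d h w) i j := by
  unfold Cmat
  split
  · exact le_refl 0
  · rename_i hne
    have hr : 0 < ‖x i - x j‖ := by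
      rw [norm_pos_iff, sub_ne_zero]
      exact fun he => hne (hx he)
    have h1 := dwh_nonpos hw hh hr
    have h2 : 0 ≤ -2 * dwh d h w ‖x i - x j‖ := by linarith
    exact div_nonneg h2 hr.le

/-- strict diagonal dominance and unique solvability of the coefficient
matrix of the implicit viscous prediction step of the ISPH method. -/
theorem statement0 (d N : ℕ) (hd : d = 2 ∨ d = 3)
    (x : Fin N → Pt d) (hx : Function.Injective x)
    (V : Fin N → ℝ) (hV : ∀ i, 0 < V i)
    (w : ℝ → ℝ) (r₀ : ℝ) (hw : IsRefWeight d w r₀)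
    (h : ℝ) (hh : 0 < h) (Δt ν : ℝ) (hΔt : 0 < Δt) (hν : 0 < ν)
    (Λfl Λsf Λwl : Finset (Fin N))
    (hd1 : Disjoint Λfl Λsf) (hd2 : Disjoint Λfl Λwl) (hd3 : Disjoint Λsf Λwl)
    (hcover : Λfl ∪ Λsf ∪ Λwl = Finset.univ)
    (A : Matrix {i // i ∈ Λfl ∪ Λsf} {i // i ∈ Λfl ∪ Λsf} ℝ)
    (hA : ∀ i j, A i j =
      if i = j then 1 + Δt * ν * ∑ l : Fin N, V l * Cmat x (dwh d h w) i.1 l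
      else -(Δt * ν * V j.1 * Cmat x (dwh d h w) i.1 j.1)) :
    (∀ i, 1 ≤ |A i i| - ∑ j ∈ Finset.univ.erase i, |A i j|) ∧
    IsUnit A.det ∧
    ∀ b : {i // i ∈ Λfl ∪ Λsf} → ℝ, ∃! v, A.mulVec v = b := by
  have hC : ∀ i j : Fin N, 0 ≤ Cmat x (dwh d h w) i j := Cmat_nonneg hx hw hh
  set C := Cmat x (dwh d h w) with hCdef
  have key : ∀ i, 1 ≤ |A i i| - ∑ j ∈ Finset.univ.erase i, |A i j| := by
    intro i
    have hS : 0 ≤ ∑ l : Fin N, V l * C i.1 l :=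
      Finset.sum_nonneg fun l _ => mul_nonneg (hV l).le (hC _ _)
    have hdiag : A i i = 1 + Δt * ν * ∑ l : Fin N, V l * C i.1 l := by
      rw [hA]; simp
    have hΔν : (0:ℝ) ≤ Δt * ν := mul_nonneg hΔt.le hν.le
    have hdiagpos : 1 ≤ A i i := by
      rw [hdiag]; nlinarith [mul_nonneg hΔν hS]
    have habs : |A i i| = A i i := abs_of_pos (by linarith)
    have hsum : ∑ j ∈ Finset.univ.erase i, |A i j|
        = Δt * ν * ∑ j ∈ Finset.univ.erase i, V j.1 * C i.1 j.1 := by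
      rw [Finset.mul_sum]
      refine Finset.sum_congr rfl fun j hj => ?_
      have hji : j ≠ i := Finset.ne_of_mem_erase hj
      rw [hA, if_neg (Ne.symm hji), abs_neg,
        abs_of_nonneg (mul_nonneg (mul_nonneg hΔν (hV _).le) (hC _ _)), mul_assoc]
    have hle : ∑ j ∈ Finset.univ.erase i, V j.1 * C i.1 j.1
        ≤ ∑ l : Fin N, V l * C i.1 l := by
      calc ∑ j ∈ Finset.univ.erase i, V j.1 * C i.1 j.1
          ≤ ∑ j : {i // i ∈ Λfl ∪ Λsf}, V j.1 * C i.1 j.1 :=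
            Finset.sum_le_sum_of_subset_of_nonneg (Finset.subset_univ _)
              (fun l _ _ => mul_nonneg (hV _).le (hC _ _))
        _ = ∑ l ∈ Λfl ∪ Λsf, V l * C i.1 l := Finset.sum_coe_sort (Λfl ∪ Λsf) (fun l => V l * C i.1 l)
        _ ≤ ∑ l : Fin N, V l * C i.1 l :=
            Finset.sum_le_sum_of_subset_of_nonneg (Finset.subset_univ _)
              (fun l _ _ => mul_nonneg (hV _).le (hC _ _))
    rw [habs, hsum, hdiag]
    have := mul_le_mul_of_nonneg_left hle hΔν
    linarith
  have hdet : A.det ≠ 0 := by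
    refine det_ne_zero_of_sum_row_lt_diag (fun k => ?_)
    have := key k
    simp only [Real.norm_eq_abs]
    linarith
  have hdet' : IsUnit A.det := isUnit_iff_ne_zero.mpr hdet
  refine ⟨key, hdet', fun b => ?_⟩
  refine ⟨A⁻¹.mulVec b, ?_, ?_⟩
  · show A.mulVec (A⁻¹.mulVec b) = b
    rw [Matrix.mulVec_mulVec, Matrix.mul_nonsing_inv _ hdet', Matrix.one_mulVec]
  · intro v hv
    rw [← hv, Matrix.mulVec_mulVec, Matrix.nonsing_inv_mul _ hdet', Matrix.one_mulVec]
end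
end

section
/- Let d ∈ {2,3}, let x_1,…,x_N be pairwise distinct points in ℝ^d with particle volumes V_1,…,V_N > 0, let w be a reference weight function, and h > 0. Let the index set be partitioned into fluid indices Λ_fl, surface indices Λ_sf and wall indices Λ_wl, and define, for i, j ∈ Λ_fl, Â_ij := −C_ij for i ≠ j and Â_ii := Σ_{l ∈ (Λ_fl ∪ Λ_sf) \ {i}} (V_l / V_i) C_il, where C_ij := −2 ẇ_h(|x_i − x_j|)/|x_i − x_j| (i ≠ j), C_ii := 0. Then for every vector α = (α_i)_{i ∈ Λ_fl} of reals, Σ_{i,j ∈ Λ_fl} α_i α_j Â_ij = Σ_{i<j, i,j ∈ Λ_fl} ((V_j α_i − V_i α_j)² / (V_i V_j)) C_ij + Σ_{i ∈ Λ_fl} α_i² Σ_{k ∈ Λ_sf} (V_k / V_i) C_ik; in particular this quadratic form is nonnegative. -/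
open MeasureTheory Finset
open scoped BigOperators RealInnerProductSpace

noncomputable section

open ISPH

lemma pair_sum_aux {ι : Type*} [LinearOrder ι] (S : Finset ι) (f : ι → ι → ℝ)
    (hdiag : ∀ i ∈ S, f i i = 0) :
    ∑ i ∈ S, ∑ j ∈ S, f i j
      = ∑ i ∈ S, ∑ j ∈ S.filter (fun j => i < j), (f i j + f j i) := by
  classical
  have hsplit : ∀ i ∈ S, ∑ j ∈ S, f i j
      = ∑ j ∈ S.filter (fun j => i < j), f i j
        + ∑ j ∈ S.filter (fun j => j < i), f i j := by
    intro i hi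
    rw [← Finset.sum_filter_add_sum_filter_not S (fun j => i < j) (f i)]
    congr 1
    rw [← Finset.sum_filter_add_sum_filter_not (S.filter (fun j => ¬ i < j))
      (fun j => j < i) (f i)]
    have h1 : (S.filter (fun j => ¬ i < j)).filter (fun j => j < i)
        = S.filter (fun j => j < i) := by
      ext j
      simp only [Finset.mem_filter]
      constructor
      · rintro ⟨⟨hj, _⟩, hji⟩; exact ⟨hj, hji⟩
      · rintro ⟨hj, hji⟩; exact ⟨⟨hj, not_lt.mpr hji.le⟩, hji⟩
    have h2 : ∑ j ∈ (S.filter (fun j => ¬ i < j)).filter (fun j => ¬ j < i), f i j = 0 := by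
      apply Finset.sum_eq_zero
      intro j hj
      simp only [Finset.mem_filter, not_lt] at hj
      obtain ⟨⟨hjS, hji⟩, hij⟩ := hj
      have : j = i := le_antisymm hji hij
      rw [this]; exact hdiag i hi
    rw [h1, h2, add_zero]
  calc ∑ i ∈ S, ∑ j ∈ S, f i j
      = ∑ i ∈ S, (∑ j ∈ S.filter (fun j => i < j), f i j
        + ∑ j ∈ S.filter (fun j => j < i), f i j) := Finset.sum_congr rfl hsplit
    _ = ∑ i ∈ S, ∑ j ∈ S.filter (fun j => i < j), f i j
        + ∑ i ∈ S, ∑ j ∈ S.filter (fun j => j < i), f i j := Finset.sum_add_distrib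
    _ = ∑ i ∈ S, ∑ j ∈ S.filter (fun j => i < j), f i j
        + ∑ i ∈ S, ∑ j ∈ S.filter (fun j => i < j), f j i := by
        congr 1
        refine Finset.sum_comm' ?_
        intro a b
        simp only [Finset.mem_filter]
        tauto
    _ = ∑ i ∈ S, ∑ j ∈ S.filter (fun j => i < j), (f i j + f j i) := by
        rw [← Finset.sum_add_distrib]
        exact Finset.sum_congr rfl fun i _ => Finset.sum_add_distrib.symm

/-- the quadratic form of the pressure Poisson matrix of the ISPH
method is a sum of nonnegative terms, and in particular nonnegative. -/
theorem statement1 (d N : ℕ) (hd : d = 2 ∨ d = 3)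
    (x : Fin N → Pt d) (hx : Function.Injective x)
    (V : Fin N → ℝ) (hV : ∀ i, 0 < V i)
    (w : ℝ → ℝ) (r₀ : ℝ) (hw : IsRefWeight d w r₀)
    (h : ℝ) (hh : 0 < h)
    (Λfl Λsf Λwl : Finset (Fin N))
    (hd1 : Disjoint Λfl Λsf) (hd2 : Disjoint Λfl Λwl) (hd3 : Disjoint Λsf Λwl)
    (hcover : Λfl ∪ Λsf ∪ Λwl = Finset.univ)
    (Ahat : Fin N → Fin N → ℝ)
    (hAhat : ∀ i ∈ Λfl, ∀ j ∈ Λfl, Ahat i j =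
      if i = j then ∑ l ∈ (Λfl ∪ Λsf).erase i, (V l / V i) * Cmat x (dwh d h w) i l
      else -(Cmat x (dwh d h w) i j))
    (α : Fin N → ℝ) :
    (∑ i ∈ Λfl, ∑ j ∈ Λfl, α i * α j * Ahat i j =
      (∑ i ∈ Λfl, ∑ j ∈ Λfl.filter (fun j => i < j),
        ((V j * α i - V i * α j) ^ 2 / (V i * V j)) * Cmat x (dwh d h w) i j) +
      ∑ i ∈ Λfl, α i ^ 2 * ∑ k ∈ Λsf, (V k / V i) * Cmat x (dwh d h w) i k) ∧
    0 ≤ ∑ i ∈ Λfl, ∑ j ∈ Λfl, α i * α j * Ahat i j := by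
  classical
  set C : Fin N → Fin N → ℝ := Cmat x (dwh d h w) with hCdef
  -- derivative of w is nonpositive on [0, ∞)
  have hderiv_nonpos : ∀ t : ℝ, 0 ≤ t → deriv w t ≤ 0 := by
    intro t ht
    rcases eq_or_lt_of_le ht with h0 | h0
    · rw [← h0, hw.deriv_zero]
    · rcases lt_or_ge t r₀ with h1 | h1
      · exact (hw.deriv_neg t h0 h1).le
      · rw [hw.deriv_eq_zero t h1]
  -- dwh is nonpositive for positive radii
  have hdw_nonpos : ∀ r : ℝ, 0 < r → dwh d h w r ≤ 0 := by
    intro r hr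
    have hrh : 0 < r / h := div_pos hr hh
    have hdiff : DifferentiableAt ℝ w (r / h) :=
      (hw.smooth.contDiffAt (Ici_mem_nhds hrh)).differentiableAt two_ne_zero
    have h1 : HasDerivAt (fun s : ℝ => s / h) (1 / h) r := by
      simpa using (hasDerivAt_id r).div_const h
    have hcomp : HasDerivAt (fun s : ℝ => w (s / h)) (deriv w (r / h) * (1 / h)) r :=
      (hdiff.hasDerivAt).comp r h1
    have hwh : HasDerivAt (wh d h w) ((h ^ d)⁻¹ * (deriv w (r / h) * (1 / h))) r :=
      hcomp.const_mul _
    rw [dwh, hwh.deriv]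
    have hle := hderiv_nonpos (r / h) hrh.le
    have hpos1 : (0:ℝ) ≤ (h ^ d)⁻¹ := by positivity
    have hpos2 : (0:ℝ) ≤ 1 / h := by positivity
    have hp := mul_nonneg hpos1 hpos2
    nlinarith
  -- C is nonnegative
  have hC_nonneg : ∀ i j, 0 ≤ C i j := by
    intro i j
    rw [hCdef]
    unfold Cmat
    by_cases hij : i = j
    · simp [hij]
    · simp only [hij, if_false]
      have hne : x i ≠ x j := fun hxx => hij (hx hxx)
      have hr : 0 < ‖x i - x j‖ := by
        rw [norm_sub_pos_iff]; exact hne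
      have hle := hdw_nonpos _ hr
      apply div_nonneg _ hr.le
      nlinarith
  -- C is symmetric
  have hC_symm : ∀ i j, C i j = C j i := by
    intro i j
    rw [hCdef]
    by_cases hij : i = j
    · simp [Cmat, hij]
    · simp [Cmat, hij, Ne.symm hij, norm_sub_rev (x i) (x j)]
  -- C vanishes on the diagonal
  have hC_diag : ∀ i, C i i = 0 := by intro i; simp [hCdef, Cmat]
  -- main identity
  have key : ∑ i ∈ Λfl, ∑ j ∈ Λfl, α i * α j * Ahat i j =
      (∑ i ∈ Λfl, ∑ j ∈ Λfl.filter (fun j => i < j),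
        ((V j * α i - V i * α j) ^ 2 / (V i * V j)) * C i j) +
      ∑ i ∈ Λfl, α i ^ 2 * ∑ k ∈ Λsf, (V k / V i) * C i k := by
    have step1 : ∀ i ∈ Λfl, ∑ j ∈ Λfl, α i * α j * Ahat i j
        = (∑ j ∈ Λfl.erase i, (α i ^ 2 * (V j / V i) * C i j - α i * α j * C i j))
          + α i ^ 2 * ∑ k ∈ Λsf, (V k / V i) * C i k := by
      intro i hi
      have hiΛsf : i ∉ Λsf := Finset.disjoint_left.mp hd1 hi
      have herase : (Λfl ∪ Λsf).erase i = Λfl.erase i ∪ Λsf := by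
        rw [Finset.erase_union_distrib, Finset.erase_eq_of_notMem hiΛsf]
      have hdisj : Disjoint (Λfl.erase i) Λsf :=
        Finset.disjoint_of_subset_left (Finset.erase_subset _ _) hd1
      rw [← Finset.add_sum_erase Λfl _ hi]
      have hAii : Ahat i i = ∑ l ∈ (Λfl ∪ Λsf).erase i, (V l / V i) * C i l := by
        rw [hAhat i hi i hi]; simp
      rw [hAii, herase, Finset.sum_union hdisj]
      have hrest : ∑ j ∈ Λfl.erase i, α i * α j * Ahat i j
          = ∑ j ∈ Λfl.erase i, (-(α i * α j * C i j)) := by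
        apply Finset.sum_congr rfl
        intro j hj
        have hjmem := Finset.mem_of_mem_erase hj
        have hji : i ≠ j := fun hij => (Finset.ne_of_mem_erase hj) hij.symm
        rw [hAhat i hi j hjmem, if_neg hji]; ring
      have e1 : α i * α i * (∑ l ∈ Λfl.erase i, (V l / V i) * C i l)
          = ∑ j ∈ Λfl.erase i, α i ^ 2 * (V j / V i) * C i j := by
        rw [Finset.mul_sum]
        exact Finset.sum_congr rfl fun j _ => by ring
      have e2 : α i * α i * (∑ l ∈ Λsf, (V l / V i) * C i l)
          = α i ^ 2 * ∑ k ∈ Λsf, (V k / V i) * C i k := by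
        rw [Finset.mul_sum, Finset.mul_sum]
        exact Finset.sum_congr rfl fun j _ => by ring
      rw [mul_add, e1, e2, hrest, Finset.sum_neg_distrib, Finset.sum_sub_distrib]
      ring
    rw [Finset.sum_congr rfl step1, Finset.sum_add_distrib]
    congr 1
    have hfull : ∀ i ∈ Λfl,
        ∑ j ∈ Λfl.erase i, (α i ^ 2 * (V j / V i) * C i j - α i * α j * C i j)
          = ∑ j ∈ Λfl, (α i ^ 2 * (V j / V i) * C i j - α i * α j * C i j) := by
      intro i _
      apply Finset.sum_erase
      rw [hC_diag i]; ring
    rw [Finset.sum_congr rfl hfull,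
      pair_sum_aux Λfl _ (fun i _ => by rw [hC_diag i]; ring)]
    apply Finset.sum_congr rfl
    intro i hi
    apply Finset.sum_congr rfl
    intro j hj
    rw [hC_symm j i]
    have hVi := (hV i).ne'
    have hVj := (hV j).ne'
    field_simp
    ring
  refine ⟨key, ?_⟩
  rw [key]
  apply add_nonneg
  · apply Finset.sum_nonneg; intro i _
    apply Finset.sum_nonneg; intro j _
    apply mul_nonneg _ (hC_nonneg i j)
    apply div_nonneg (sq_nonneg _) (mul_nonneg (hV i).le (hV j).le)
  · apply Finset.sum_nonneg; intro i _
    apply mul_nonneg (sq_nonneg _)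
    apply Finset.sum_nonneg; intro k _
    exact mul_nonneg (div_nonneg (hV k).le (hV i).le) (hC_nonneg i k)
end
end

section
/- Let d ∈ {2,3}, let x_1,…,x_N be pairwise distinct points in ℝ^d with particle volumes V_1,…,V_N > 0, let w be a reference weight function with support radius r₀, and h > 0. Let the index set be partitioned into Λ_fl, Λ_sf, Λ_wl, and assume the surface connectivity condition: for every i ∈ Λ_fl there is a finite sequence of indices i = i_1, i_2, …, i_ζ with i_1,…,i_{ζ−1} ∈ Λ_fl, i_ζ ∈ Λ_sf, and 0 < |x_{i_l} − x_{i_{l+1}}| < r₀ h for 1 ≤ l < ζ. Define Â as in the pressure Poisson system: Â_ij := −C_ij for i ≠ j ∈ Λ_fl and Â_ii := Σ_{l ∈ (Λ_fl ∪ Λ_sf) \ {i}} (V_l / V_i) C_il, where C_ij := −2 ẇ_h(|x_i − x_j|)/|x_i − x_j| (i ≠ j), C_ii := 0. Then Â is a symmetric positive definite matrix; consequently, with D := diag(V_i)_{i ∈ Λ_fl}, the linear system Â D p = b has a unique solution p for every right-hand side b, i.e. the discrete pressure Poisson equation of the ISPH method is uniquely solvable. -/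
open MeasureTheory Finset
open scoped BigOperators RealInnerProductSpace

noncomputable section

open ISPH

section AuxLemmas

variable {d N : ℕ}

lemma dwh_eq_aux {w : ℝ → ℝ} {r₀ : ℝ} (hw : IsRefWeight d w r₀) {h : ℝ} (hh : 0 < h)
    {r : ℝ} (hr : 0 < r) :
    dwh d h w r = (h ^ d)⁻¹ * (deriv w (r / h) * h⁻¹) := by
  have hrh : 0 < r / h := div_pos hr hh
  have hdiff : DifferentiableAt ℝ w (r / h) := by
    have h1 : Set.Ici (0:ℝ) ∈ nhds (r / h) := Ici_mem_nhds hrh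
    exact (hw.smooth.contDiffAt h1).differentiableAt (by norm_num)
  have h2 : HasDerivAt (fun s : ℝ => s / h) h⁻¹ r := by
    simpa using (hasDerivAt_id r).div_const h
  have h3 : HasDerivAt (fun s : ℝ => w (s / h)) (deriv w (r / h) * h⁻¹) r :=
    hdiff.hasDerivAt.comp r h2
  have h4 : HasDerivAt (wh d h w) ((h ^ d)⁻¹ * (deriv w (r / h) * h⁻¹)) r :=
    h3.const_mul _
  exact h4.deriv

lemma dwh_nonpos_aux {w : ℝ → ℝ} {r₀ : ℝ} (hw : IsRefWeight d w r₀) {h : ℝ} (hh : 0 < h)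
    {r : ℝ} (hr : 0 < r) : dwh d h w r ≤ 0 := by
  rw [dwh_eq_aux hw hh hr]
  rcases lt_or_ge (r / h) r₀ with hcase | hcase
  · have := hw.deriv_neg (r / h) (div_pos hr hh) hcase
    have h1 : (0:ℝ) < (h ^ d)⁻¹ := by positivity
    have h2 : (0:ℝ) < h⁻¹ := by positivity
    exact (mul_neg_of_pos_of_neg h1 (mul_neg_of_neg_of_pos this h2)).le
  · rw [hw.deriv_eq_zero _ hcase]; simp

lemma dwh_neg_aux {w : ℝ → ℝ} {r₀ : ℝ} (hw : IsRefWeight d w r₀) {h : ℝ} (hh : 0 < h)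
    {r : ℝ} (hr : 0 < r) (hr2 : r < r₀ * h) : dwh d h w r < 0 := by
  rw [dwh_eq_aux hw hh hr]
  have hcase : r / h < r₀ := (div_lt_iff₀ hh).mpr (by linarith)
  have := hw.deriv_neg (r / h) (div_pos hr hh) hcase
  have h1 : (0:ℝ) < (h ^ d)⁻¹ := by positivity
  have h2 : (0:ℝ) < h⁻¹ := by positivity
  exact mul_neg_of_pos_of_neg h1 (mul_neg_of_neg_of_pos this h2)

end AuxLemmas


/-- under the surface connectivity condition, the pressure Poisson
matrix of the ISPH method is symmetric positive definite, and the discrete pressure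
Poisson equation is uniquely solvable. -/
theorem statement2 (d N : ℕ) (hd : d = 2 ∨ d = 3)
    (x : Fin N → Pt d) (hx : Function.Injective x)
    (V : Fin N → ℝ) (hV : ∀ i, 0 < V i)
    (w : ℝ → ℝ) (r₀ : ℝ) (hw : IsRefWeight d w r₀)
    (h : ℝ) (hh : 0 < h)
    (Λfl Λsf Λwl : Finset (Fin N))
    (hd1 : Disjoint Λfl Λsf) (hd2 : Disjoint Λfl Λwl) (hd3 : Disjoint Λsf Λwl)
    (hcover : Λfl ∪ Λsf ∪ Λwl = Finset.univ)
    (hconn : ∀ i ∈ Λfl, Chain x (r₀ * h) Λfl Λsf i)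
    (Ahat : Matrix {i // i ∈ Λfl} {i // i ∈ Λfl} ℝ)
    (hAhat : ∀ i j, Ahat i j =
      if i = j then ∑ l ∈ (Λfl ∪ Λsf).erase i.1, (V l / V i.1) * Cmat x (dwh d h w) i.1 l
      else -(Cmat x (dwh d h w) i.1 j.1)) :
    Ahat.IsHermitian ∧ Ahat.PosDef ∧
    ∀ b : {i // i ∈ Λfl} → ℝ,
      ∃! p, (Ahat * Matrix.diagonal (fun i : {i // i ∈ Λfl} => V i.1)).mulVec p = b := by
  classical
  set C : Fin N → Fin N → ℝ := Cmat x (dwh d h w) with hC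
  -- basic facts about C
  have hC0 : ∀ i, C i i = 0 := fun i => by simp [hC, Cmat]
  have hnorm_pos : ∀ i j : Fin N, i ≠ j → 0 < ‖x i - x j‖ := by
    intro i j hij
    rw [norm_pos_iff, sub_ne_zero]
    exact fun e => hij (hx e)
  have hCsymm : ∀ i j, C i j = C j i := by
    intro i j
    rcases eq_or_ne i j with rfl | hij
    · rfl
    · simp only [hC, Cmat, if_neg hij, if_neg (Ne.symm hij), norm_sub_rev]
  have hCnn : ∀ i j, 0 ≤ C i j := by
    intro i j
    rcases eq_or_ne i j with rfl | hij
    · rw [hC0]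
    · have hr := hnorm_pos i j hij
      have := dwh_nonpos_aux hw hh hr
      simp only [hC, Cmat, if_neg hij]
      have : 0 ≤ -2 * dwh d h w ‖x i - x j‖ := by linarith
      positivity
  have hCpos : ∀ i j, i ≠ j → ‖x i - x j‖ < r₀ * h → 0 < C i j := by
    intro i j hij hlt
    have hr := hnorm_pos i j hij
    have := dwh_neg_aux hw hh hr hlt
    simp only [hC, Cmat, if_neg hij]
    have h1 : 0 < -2 * dwh d h w ‖x i - x j‖ := by linarith
    positivity
  -- double-sum conversion from subtype sums to Finset sums
  have conv2 : ∀ g : Fin N → Fin N → ℝ,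
      (∑ i : {i // i ∈ Λfl}, ∑ j : {i // i ∈ Λfl}, g i.1 j.1)
        = ∑ i ∈ Λfl, ∑ j ∈ Λfl, g i j := by
    intro g
    simp only [Finset.univ_eq_attach]
    rw [Finset.sum_attach Λfl (fun k => ∑ j ∈ Λfl.attach, g k j.1)]
    exact Finset.sum_congr rfl fun i _ => Finset.sum_attach Λfl (g i)
  -- the quadratic form
  have hquad : ∀ (v : {i // i ∈ Λfl} → ℝ) (p : Fin N → ℝ),
      (∀ i : {i // i ∈ Λfl}, v i = p i.1) →
      dotProduct v (Ahat.mulVec v) =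
        (∑ i ∈ Λfl, (∑ l ∈ (Λfl ∪ Λsf).erase i, (V l / V i) * C i l) * p i ^ 2)
          - ∑ i ∈ Λfl, ∑ j ∈ Λfl, C i j * (p i * p j) := by
    intro v p hvp
    have step1 : dotProduct v (Ahat.mulVec v)
        = ∑ i : {i // i ∈ Λfl}, ∑ j : {i // i ∈ Λfl}, v i * (Ahat i j * v j) := by
      simp [dotProduct, Matrix.mulVec, Finset.mul_sum]
    have step2 : ∀ i j : {i // i ∈ Λfl}, v i * (Ahat i j * v j)
        = (if i.1 = j.1 then (∑ l ∈ (Λfl ∪ Λsf).erase i.1, (V l / V i.1) * C i.1 l) * p i.1 ^ 2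
            else 0)
          - C i.1 j.1 * (p i.1 * p j.1) := by
      intro i j
      rw [hAhat, hvp, hvp]
      by_cases hij : i = j
      · subst hij
        rw [if_pos rfl, if_pos rfl, hC0]
        ring
      · have hij' : i.1 ≠ j.1 := fun e => hij (Subtype.ext e)
        rw [if_neg hij, if_neg hij']
        ring
    rw [step1]
    calc (∑ i : {i // i ∈ Λfl}, ∑ j : {i // i ∈ Λfl}, v i * (Ahat i j * v j))
        = ∑ i : {i // i ∈ Λfl}, ∑ j : {i // i ∈ Λfl},
            ((if i.1 = j.1 then
                (∑ l ∈ (Λfl ∪ Λsf).erase i.1, (V l / V i.1) * C i.1 l) * p i.1 ^ 2 else 0)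
              - C i.1 j.1 * (p i.1 * p j.1)) := by
          exact Finset.sum_congr rfl fun i _ => Finset.sum_congr rfl fun j _ => step2 i j
      _ = ∑ i ∈ Λfl, ∑ j ∈ Λfl,
            ((if i = j then
                (∑ l ∈ (Λfl ∪ Λsf).erase i, (V l / V i) * C i l) * p i ^ 2 else 0)
              - C i j * (p i * p j)) :=
          conv2 (fun a b => (if a = b then
            (∑ l ∈ (Λfl ∪ Λsf).erase a, (V l / V a) * C a l) * p a ^ 2 else 0)
              - C a b * (p a * p b))
      _ = (∑ i ∈ Λfl, (∑ l ∈ (Λfl ∪ Λsf).erase i, (V l / V i) * C i l) * p i ^ 2)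
            - ∑ i ∈ Λfl, ∑ j ∈ Λfl, C i j * (p i * p j) := by
          rw [← Finset.sum_sub_distrib]
          refine Finset.sum_congr rfl fun i hi => ?_
          rw [Finset.sum_sub_distrib, Finset.sum_ite_eq, if_pos hi]
    -- done
  -- split the diagonal sum
  have hsplitdiag : ∀ i ∈ Λfl, (∑ l ∈ (Λfl ∪ Λsf).erase i, (V l / V i) * C i l)
      = (∑ l ∈ Λfl, (V l / V i) * C i l) + ∑ l ∈ Λsf, (V l / V i) * C i l := by
    intro i hi
    have hins : i ∉ Λsf := Finset.disjoint_left.mp hd1 hi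
    have h1 : (Λfl ∪ Λsf).erase i = Λfl.erase i ∪ Λsf := by
      rw [Finset.erase_union_distrib, Finset.erase_eq_of_notMem hins]
    have hdisj' : Disjoint (Λfl.erase i) Λsf :=
      Finset.disjoint_of_subset_left (Finset.erase_subset _ _) hd1
    rw [h1, Finset.sum_union hdisj',
      Finset.sum_erase _ (by rw [hC0]; ring)]
  -- the decomposition into nonnegative pieces
  have hform : ∀ (v : {i // i ∈ Λfl} → ℝ) (p : Fin N → ℝ),
      (∀ i : {i // i ∈ Λfl}, v i = p i.1) →
      dotProduct v (Ahat.mulVec v) =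
        (1/2) * (∑ i ∈ Λfl, ∑ j ∈ Λfl,
            C i j * ((V j * p i - V i * p j) ^ 2 / (V i * V j)))
          + ∑ i ∈ Λfl, ∑ l ∈ Λsf, (V l / V i) * C i l * p i ^ 2 := by
    intro v p hvp
    rw [hquad v p hvp]
    have hT1 : (∑ i ∈ Λfl, (∑ l ∈ (Λfl ∪ Λsf).erase i, (V l / V i) * C i l) * p i ^ 2)
        = (∑ i ∈ Λfl, ∑ l ∈ Λfl, (V l / V i) * C i l * p i ^ 2)
          + ∑ i ∈ Λfl, ∑ l ∈ Λsf, (V l / V i) * C i l * p i ^ 2 := by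
      rw [← Finset.sum_add_distrib]
      refine Finset.sum_congr rfl fun i hi => ?_
      rw [hsplitdiag i hi, add_mul, Finset.sum_mul, Finset.sum_mul]
    rw [hT1]
    have hE : (∑ i ∈ Λfl, ∑ j ∈ Λfl,
          C i j * ((V j * p i - V i * p j) ^ 2 / (V i * V j)))
        = (∑ i ∈ Λfl, ∑ j ∈ Λfl, (V j / V i) * C i j * p i ^ 2)
          + (∑ i ∈ Λfl, ∑ j ∈ Λfl, (V i / V j) * C i j * p j ^ 2)
          - 2 * ∑ i ∈ Λfl, ∑ j ∈ Λfl, C i j * (p i * p j) := by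
      rw [Finset.mul_sum, ← Finset.sum_add_distrib, ← Finset.sum_sub_distrib]
      refine Finset.sum_congr rfl fun i _ => ?_
      rw [Finset.mul_sum, ← Finset.sum_add_distrib, ← Finset.sum_sub_distrib]
      refine Finset.sum_congr rfl fun j _ => ?_
      have hVi := (hV i).ne'
      have hVj := (hV j).ne'
      field_simp
      ring
    have hswap : (∑ i ∈ Λfl, ∑ j ∈ Λfl, (V i / V j) * C i j * p j ^ 2)
        = ∑ i ∈ Λfl, ∑ j ∈ Λfl, (V j / V i) * C i j * p i ^ 2 := by
      rw [Finset.sum_comm]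
      exact Finset.sum_congr rfl fun i _ => Finset.sum_congr rfl fun j _ => by
        rw [hCsymm]
    have hfix : (∑ i ∈ Λfl, ∑ l ∈ Λfl, (V l / V i) * C i l * p i ^ 2)
        = ∑ i ∈ Λfl, ∑ j ∈ Λfl, (V j / V i) * C i j * p i ^ 2 := rfl
    rw [hfix]
    rw [hswap] at hE
    linarith [hE]
  -- key sign facts
  have hEterm_nn : ∀ (p : Fin N → ℝ) (i j : Fin N),
      0 ≤ C i j * ((V j * p i - V i * p j) ^ 2 / (V i * V j)) := by
    intro p i j
    have h1 : (0:ℝ) < V i * V j := mul_pos (hV i) (hV j)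
    have := hCnn i j
    positivity
  have hSterm_nn : ∀ (p : Fin N → ℝ) (i l : Fin N),
      0 ≤ (V l / V i) * C i l * p i ^ 2 := by
    intro p i l
    have h1 := (hV i)
    have h2 := (hV l)
    have := hCnn i l
    positivity
  -- positive definiteness
  have hherm : Ahat.IsHermitian := by
    rw [Matrix.IsHermitian]
    ext i j
    simp only [Matrix.conjTranspose_apply, star_trivial]
    rw [hAhat, hAhat]
    rcases eq_or_ne i j with rfl | hij
    · simp
    · rw [if_neg (Ne.symm hij), if_neg hij, hCsymm]
  have hpd : Ahat.PosDef := by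
    refine Matrix.PosDef.of_dotProduct_mulVec_pos hherm ?_
    intro v hv
    set p : Fin N → ℝ := fun k => if hk : k ∈ Λfl then v ⟨k, hk⟩ else 0 with hpdef
    have hvp : ∀ i : {i // i ∈ Λfl}, v i = p i.1 := by
      intro i
      simp only [hpdef, i.2, dif_pos]
    have hsv : star v = v := by simp
    rw [hsv, hform v p hvp]
    set E := ∑ i ∈ Λfl, ∑ j ∈ Λfl, C i j * ((V j * p i - V i * p j) ^ 2 / (V i * V j)) with hEdef
    set S := ∑ i ∈ Λfl, ∑ l ∈ Λsf, (V l / V i) * C i l * p i ^ 2 with hSdef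
    have hEnn : 0 ≤ E :=
      Finset.sum_nonneg fun i _ => Finset.sum_nonneg fun j _ => hEterm_nn p i j
    have hSnn : 0 ≤ S :=
      Finset.sum_nonneg fun i _ => Finset.sum_nonneg fun l _ => hSterm_nn p i l
    rcases lt_or_eq_of_le (by linarith : (0:ℝ) ≤ (1/2) * E + S) with hlt | heq
    · exact hlt
    exfalso
    -- both pieces vanish
    have hE0 : E = 0 := by linarith
    have hS0 : S = 0 := by linarith
    -- extract pointwise facts
    have hEpt : ∀ i ∈ Λfl, ∀ j ∈ Λfl,
        C i j * ((V j * p i - V i * p j) ^ 2 / (V i * V j)) = 0 := by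
      intro i hi j hj
      have h1 := (Finset.sum_eq_zero_iff_of_nonneg
        (fun i _ => Finset.sum_nonneg fun j _ => hEterm_nn p i j)).mp hE0 i hi
      exact (Finset.sum_eq_zero_iff_of_nonneg
        (fun j _ => hEterm_nn p i j)).mp h1 j hj
    have hSpt : ∀ i ∈ Λfl, ∀ l ∈ Λsf, (V l / V i) * C i l * p i ^ 2 = 0 := by
      intro i hi l hl
      have h1 := (Finset.sum_eq_zero_iff_of_nonneg
        (fun i _ => Finset.sum_nonneg fun l _ => hSterm_nn p i l)).mp hS0 i hi
      exact (Finset.sum_eq_zero_iff_of_nonneg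
        (fun l _ => hSterm_nn p i l)).mp h1 l hl
    -- derived relations
    have hfl : ∀ i ∈ Λfl, ∀ j ∈ Λfl, 0 < ‖x i - x j‖ → ‖x i - x j‖ < r₀ * h →
        V j * p i = V i * p j := by
      intro i hi j hj hn hn2
      have hij : i ≠ j := by
        intro e; rw [e, sub_self, norm_zero] at hn; exact lt_irrefl 0 hn
      have hcp := hCpos i j hij hn2
      have := hEpt i hi j hj
      have h2 : (V j * p i - V i * p j) ^ 2 / (V i * V j) = 0 := by
        rcases mul_eq_zero.mp this with h | h
        · exact absurd h hcp.ne'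
        · exact h
      have hvv : (V i * V j) ≠ 0 := (mul_pos (hV i) (hV j)).ne'
      field_simp at h2
      have h3 := (div_eq_zero_iff.mp h2).resolve_right (by rw [mul_comm]; exact hvv)
      linarith [sub_eq_zero.mp ((pow_eq_zero_iff two_ne_zero).mp h3)]
    have hsf : ∀ i ∈ Λfl, ∀ l ∈ Λsf, 0 < ‖x i - x l‖ → ‖x i - x l‖ < r₀ * h →
        p i = 0 := by
      intro i hi l hl hn hn2
      have hil : i ≠ l := by
        intro e; rw [e, sub_self, norm_zero] at hn; exact lt_irrefl 0 hn
      have hcp := hCpos i l hil hn2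
      have hr : (0:ℝ) < V l / V i := div_pos (hV l) (hV i)
      have := hSpt i hi l hl
      have h2 : p i ^ 2 = 0 := by
        rcases mul_eq_zero.mp this with h | h
        · rcases mul_eq_zero.mp h with h' | h'
          · exact absurd h' hr.ne'
          · exact absurd h' hcp.ne'
        · exact h
      exact pow_eq_zero_iff (n := 2) (by norm_num) |>.mp h2
    -- chain argument: p vanishes on Λfl
    have hzero : ∀ i ∈ Λfl, p i = 0 := by
      intro i hi
      obtain ⟨ζ, c, hc0, hmem, hdist, hlast⟩ := hconn i hi
      have hζ : 1 ≤ ζ := by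
        by_contra hcon
        have hz : ζ = 0 := by omega
        rw [hz] at hlast
        rw [hc0] at hlast
        exact Finset.disjoint_left.mp hd1 hi hlast
      have main : ∀ m, m < ζ → p (c (ζ - 1 - m)) = 0 := by
        intro m
        induction m with
        | zero =>
          intro _
          have hl : ζ - 1 < ζ := by omega
          have h1 := hmem _ hl
          have h2 := hdist _ hl
          have he : ζ - 1 + 1 = ζ := by omega
          rw [he] at h2
          simpa using hsf _ h1 _ hlast h2.1 h2.2
        | succ m ih =>
          intro hm
          have hl : ζ - 1 - (m + 1) < ζ := by omega
          have hl1 : ζ - 1 - (m + 1) + 1 = ζ - 1 - m := by omega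
          have hl2 : ζ - 1 - m < ζ := by omega
          have h1 := hmem _ hl
          have h1' := hmem _ hl2
          have h2 := hdist _ hl
          rw [hl1] at h2
          have hih := ih (by omega)
          have := hfl _ h1 _ h1' h2.1 h2.2
          rw [hih, mul_zero] at this
          have hVne := (hV (c (ζ - 1 - m))).ne'
          rcases mul_eq_zero.mp this with h | h
          · exact absurd h hVne
          · exact h
      have := main (ζ - 1) (by omega)
      have hz : ζ - 1 - (ζ - 1) = 0 := by omega
      rw [hz, hc0] at this
      exact this
    -- contradiction with v ≠ 0
    apply hv
    funext i
    have := hzero i.1 i.2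
    simp [hvp i, this]
  refine ⟨hherm, hpd, ?_⟩
  -- unique solvability
  have hdetA : Ahat.det ≠ 0 := ne_of_gt hpd.det_pos
  set D := Matrix.diagonal (fun i : {i // i ∈ Λfl} => V i.1) with hD
  have hdetD : D.det ≠ 0 := by
    rw [hD, Matrix.det_diagonal]
    exact Finset.prod_ne_zero_iff.mpr fun i _ => (hV i.1).ne'
  have hdet : (Ahat * D).det ≠ 0 := by
    rw [Matrix.det_mul]
    exact mul_ne_zero hdetA hdetD
  have hunit : IsUnit (Ahat * D).det := isUnit_iff_ne_zero.mpr hdet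
  intro b
  refine ⟨(Ahat * D)⁻¹.mulVec b, ?_, ?_⟩
  · show (Ahat * D).mulVec ((Ahat * D)⁻¹.mulVec b) = b
    rw [Matrix.mulVec_mulVec, Matrix.mul_nonsing_inv _ hunit, Matrix.one_mulVec]
  · intro q hq
    have := congrArg (Matrix.mulVec (Ahat * D)⁻¹) hq
    rwa [Matrix.mulVec_mulVec, Matrix.nonsing_inv_mul _ hunit, Matrix.one_mulVec] at this
end
end

section
/- Let d ∈ {2,3}, let x_1,…,x_N be pairwise distinct points in ℝ^d with particle volumes V_1,…,V_N > 0, let w be a reference weight function with support radius r₀, and h > 0. Let the index set {1,…,N} be partitioned into Λ_fl, Λ_sf, Λ_wl and assume the wall connectivity condition: for every i ∈ Λ_fl ∪ Λ_sf there is a finite sequence i = i_1, …, i_ζ with i_ζ ∈ Λ_wl and 0 < |x_{i_l} − x_{i_{l+1}}| < r₀ h for 1 ≤ l < ζ. Let φ : {1,…,N} → ℝ^d satisfy φ_i = 0 for all i ∈ Λ_wl. If the discrete H¹₀ seminorm of φ over {1,…,N} is zero, i.e. Σ_{i=1}^N V_i Σ_{j≠i} V_j (|φ_i − φ_j|²/|x_i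 − x_j|) |ẇ_h(|x_i − x_j|)| = 0, then φ_i = 0 for every i. -/
open MeasureTheory Finset
open scoped BigOperators RealInnerProductSpace

noncomputable section

open ISPH

/-- under the wall connectivity condition, a function vanishing on the
wall particles with zero discrete `H¹₀` seminorm vanishes identically. -/
theorem statement3 (d N : ℕ) (hd : d = 2 ∨ d = 3)
    (x : Fin N → Pt d) (hx : Function.Injective x)
    (V : Fin N → ℝ) (hV : ∀ i, 0 < V i)
    (w : ℝ → ℝ) (r₀ : ℝ) (hw : IsRefWeight d w r₀)
    (h : ℝ) (hh : 0 < h)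
    (Λfl Λsf Λwl : Finset (Fin N))
    (hd1 : Disjoint Λfl Λsf) (hd2 : Disjoint Λfl Λwl) (hd3 : Disjoint Λsf Λwl)
    (hcover : Λfl ∪ Λsf ∪ Λwl = Finset.univ)
    (hconn : ∀ i ∈ Λfl ∪ Λsf, Chain x (r₀ * h) Finset.univ Λwl i)
    (φ : Fin N → Pt d) (hφw : ∀ i ∈ Λwl, φ i = 0)
    (hzero : h1semiSq x V (dwh d h w) Finset.univ φ = 0) :
    ∀ i, φ i = 0 := by
  -- derivative of the scaled kernel is negative on (0, r₀ h)
  have hdw : ∀ r : ℝ, 0 < r → r < r₀ * h → dwh d h w r ≠ 0 := by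
    intro r hr hrR
    have hrh : 0 < r / h := div_pos hr hh
    have hrh' : r / h < r₀ := (div_lt_iff₀ hh).mpr hrR
    have hmem : Set.Ici (0:ℝ) ∈ nhds (r / h) :=
      mem_nhds_iff.mpr ⟨Set.Ioi 0, Set.Ioi_subset_Ici_self, isOpen_Ioi, hrh⟩
    have hdiff : DifferentiableAt ℝ w (r / h) :=
      (hw.smooth.contDiffAt hmem).differentiableAt two_ne_zero
    have hcomp : HasDerivAt (fun s : ℝ => w (s / h)) (deriv w (r / h) * h⁻¹) r := by
      have h1 : HasDerivAt (fun s : ℝ => s / h) h⁻¹ r := by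
        simpa using (hasDerivAt_id r).div_const h
      exact (hdiff.hasDerivAt).comp r h1
    have hwh : HasDerivAt (wh d h w) ((h ^ d)⁻¹ * (deriv w (r / h) * h⁻¹)) r := by
      unfold wh
      exact hcomp.const_mul _
    rw [dwh, hwh.deriv]
    have hneg : deriv w (r / h) < 0 := hw.deriv_neg _ hrh hrh'
    have : (h ^ d)⁻¹ * (deriv w (r / h) * h⁻¹) < 0 := by
      apply mul_neg_of_pos_of_neg
      · positivity
      · exact mul_neg_of_neg_of_pos hneg (inv_pos.mpr hh)
    exact ne_of_lt this
  -- each pair close enough has equal φ values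
  have key : ∀ i j : Fin N, 0 < ‖x i - x j‖ → ‖x i - x j‖ < r₀ * h → φ i = φ j := by
    intro i j hij hR
    have hne : i ≠ j := by
      intro e; rw [e, sub_self, norm_zero] at hij; exact lt_irrefl 0 hij
    have hnonneg : ∀ i ∈ (Finset.univ : Finset (Fin N)),
        0 ≤ V i * ∑ j ∈ Finset.univ.erase i,
          V j * (‖φ i - φ j‖ ^ 2 / ‖x i - x j‖) * |dwh d h w ‖x i - x j‖| := by
      intro i _
      apply mul_nonneg (hV i).le
      apply Finset.sum_nonneg
      intro j _
      have := (hV j).le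
      positivity
    have h1 := (Finset.sum_eq_zero_iff_of_nonneg hnonneg).mp hzero i (Finset.mem_univ i)
    have h2 : ∑ j ∈ Finset.univ.erase i,
        V j * (‖φ i - φ j‖ ^ 2 / ‖x i - x j‖) * |dwh d h w ‖x i - x j‖| = 0 := by
      rcases mul_eq_zero.mp h1 with h' | h'
      · exact absurd h' (ne_of_gt (hV i))
      · exact h'
    have hnn : ∀ j ∈ Finset.univ.erase i,
        0 ≤ V j * (‖φ i - φ j‖ ^ 2 / ‖x i - x j‖) * |dwh d h w ‖x i - x j‖| := by
      intro j _
      have := (hV j).le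
      positivity
    have h3 := (Finset.sum_eq_zero_iff_of_nonneg hnn).mp h2 j
      (Finset.mem_erase.mpr ⟨hne.symm, Finset.mem_univ j⟩)
    have hdwij : |dwh d h w ‖x i - x j‖| ≠ 0 := by
      simpa [abs_eq_zero] using hdw _ hij hR
    have hVj := ne_of_gt (hV j)
    have hxij := ne_of_gt hij
    rcases mul_eq_zero.mp h3 with h' | h'
    · rcases mul_eq_zero.mp h' with h'' | h''
      · exact absurd h'' hVj
      · have : ‖φ i - φ j‖ ^ 2 = 0 := by
          rcases div_eq_zero_iff.mp h'' with h3 | h3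
          · exact h3
          · exact absurd h3 hxij
        have : φ i - φ j = 0 := by
          simpa [pow_eq_zero_iff] using this
        exact sub_eq_zero.mp this
    · exact absurd h' hdwij
  have key' : ∀ i j : Fin N, 0 < ‖x i - x j‖ → ‖x i - x j‖ < r₀ * h → φ i = φ j := key
  intro i
  have hi : i ∈ Λfl ∪ Λsf ∪ Λwl := hcover ▸ Finset.mem_univ i
  rcases Finset.mem_union.mp hi with hi' | hi'
  · obtain ⟨ζ, c, hc0, _, hstep, hcζ⟩ := hconn i hi'
    have : ∀ m ≤ ζ, φ (c m) = φ (c ζ) := by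
      intro m hm
      induction' hmm : ζ - m with k ih generalizing m
      · have : m = ζ := by omega
        rw [this]
      · have hmlt : m < ζ := by omega
        have h1 := key _ _ (hstep m hmlt).1 (hstep m hmlt).2
        rw [h1]
        exact ih (m + 1) (by omega) (by omega)
    have h0 := this 0 (Nat.zero_le ζ)
    rw [hc0] at h0
    rw [h0, hφw _ hcζ]
  · exact hφw i hi'
end
end

section
/- Let d ∈ {2,3}, let x_1,…,x_N be pairwise distinct points in ℝ^d with particle volumes V_1,…,V_N > 0, let w be a reference weight function, h > 0, Δt > 0, and c₀ > 0. Assume the semi-regularity condition: max_{i=1,…,N} Σ_{j=1}^N V_j |x_i − x_j| |ẇ_h(|x_i − x_j|)| ≤ d + c₀ Δt. Then for every Λ ⊆ {1,…,N} and every ψ : Λ → ℝ, the discrete gradient (∇ψ)_i := Σ_{j∈Λ} V_j (ψ_j − ψ_i) ∇w_h(|x_i − x_j|) satisfies ‖∇ψ‖_{2,Λ}² ≤ (d + c₀ Δt) |ψ|_{1,Λ}². -/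
open MeasureTheory Finset
open scoped BigOperators RealInnerProductSpace

noncomputable section

open ISPH

/-- under the semi-regularity condition, the discrete `L²` norm of the
discrete gradient is controlled by the discrete `H¹₀` seminorm. -/
theorem statement7 (d N : ℕ) (hd : d = 2 ∨ d = 3)
    (x : Fin N → Pt d) (hx : Function.Injective x)
    (V : Fin N → ℝ) (hV : ∀ i, 0 < V i)
    (w : ℝ → ℝ) (r₀ : ℝ) (hw : IsRefWeight d w r₀)
    (h : ℝ) (hh : 0 < h) (Δt c₀ : ℝ) (hΔt : 0 < Δt) (hc₀ : 0 < c₀)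
    (hreg : ∀ i, ∑ j : Fin N,
      V j * ‖x i - x j‖ * |dwh d h w ‖x i - x j‖| ≤ (d : ℝ) + c₀ * Δt) :
    ∀ (Λ : Finset (Fin N)) (ψ : Fin N → ℝ),
      l2normSq V Λ (dGrad x V (dwh d h w) Λ ψ) ≤
        ((d : ℝ) + c₀ * Δt) * h1semiSq x V (dwh d h w) Λ ψ := by
  
  intro Λ ψ
  set dw := dwh d h w with hdw
  set A := (d : ℝ) + c₀ * Δt with hA
  have key : ∀ i ∈ Λ, ‖dGrad x V dw Λ ψ i‖ ^ 2 ≤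
      A * ∑ j ∈ Λ.erase i,
        V j * (‖ψ i - ψ j‖ ^ 2 / ‖x i - x j‖) * |dw ‖x i - x j‖| := by
    intro i _
    have hsum : dGrad x V dw Λ ψ i
        = ∑ j ∈ Λ.erase i, (V j * (ψ j - ψ i)) • gradW x dw i j := by
      unfold dGrad
      exact (Finset.sum_erase _ (by simp)).symm
    have hrpos : ∀ j ∈ Λ.erase i, 0 < ‖x i - x j‖ := by
      intro j hj
      have hij : x i ≠ x j := fun hxx => (Finset.ne_of_mem_erase hj) (hx hxx).symm
      exact norm_sub_pos_iff.mpr hij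
    -- step 1: triangle inequality
    have h1 : ‖dGrad x V dw Λ ψ i‖ ≤
        ∑ j ∈ Λ.erase i, V j * |ψ j - ψ i| * |dw ‖x i - x j‖| := by
      rw [hsum]
      refine (norm_sum_le _ _).trans (le_of_eq (Finset.sum_congr rfl ?_))
      intro j hj
      have hr := hrpos j hj
      unfold gradW
      rw [norm_smul, norm_smul, Real.norm_eq_abs, Real.norm_eq_abs, abs_mul, abs_div,
        abs_norm, abs_of_pos (hV j)]
      field_simp
    -- step 2: squares and Cauchy-Schwarz
    have h2 : (∑ j ∈ Λ.erase i, V j * |ψ j - ψ i| * |dw ‖x i - x j‖|) ^ 2 ≤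
        (∑ j ∈ Λ.erase i, V j * ‖x i - x j‖ * |dw ‖x i - x j‖|) *
        ∑ j ∈ Λ.erase i, V j * (‖ψ i - ψ j‖ ^ 2 / ‖x i - x j‖) * |dw ‖x i - x j‖| := by
      refine Finset.sum_sq_le_sum_mul_sum_of_sq_eq_mul _ ?_ ?_ ?_
      · intro j hj
        exact mul_nonneg (mul_nonneg (hV j).le (norm_nonneg _)) (abs_nonneg _)
      · intro j hj
        have h1' := (hrpos j hj).le
        have h2' := (hV j).le
        have h3' : (0:ℝ) ≤ ‖ψ i - ψ j‖ ^ 2 / ‖x i - x j‖ := div_nonneg (sq_nonneg _) h1'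
        exact mul_nonneg (mul_nonneg h2' h3') (abs_nonneg _)
      · intro j hj
        have hr := hrpos j hj
        have hΔ : ‖ψ i - ψ j‖ ^ 2 = |ψ j - ψ i| ^ 2 := by
          rw [Real.norm_eq_abs, abs_sub_comm]
        rw [hΔ]
        field_simp
    have h3 : (∑ j ∈ Λ.erase i, V j * ‖x i - x j‖ * |dw ‖x i - x j‖|) ≤ A := by
      refine le_trans ?_ (hreg i)
      refine Finset.sum_le_sum_of_subset_of_nonneg (Finset.subset_univ _) ?_
      intro j _ _
      exact mul_nonneg (mul_nonneg (hV j).le (norm_nonneg _)) (abs_nonneg _)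
    have hnn : 0 ≤ ∑ j ∈ Λ.erase i,
        V j * (‖ψ i - ψ j‖ ^ 2 / ‖x i - x j‖) * |dw ‖x i - x j‖| := by
      refine Finset.sum_nonneg fun j hj => ?_
      exact mul_nonneg (mul_nonneg (hV j).le (div_nonneg (sq_nonneg _) (norm_nonneg _)))
        (abs_nonneg _)
    calc ‖dGrad x V dw Λ ψ i‖ ^ 2
        ≤ (∑ j ∈ Λ.erase i, V j * |ψ j - ψ i| * |dw ‖x i - x j‖|) ^ 2 := by
          refine pow_le_pow_left₀ (norm_nonneg _) h1 2
      _ ≤ (∑ j ∈ Λ.erase i, V j * ‖x i - x j‖ * |dw ‖x i - x j‖|) *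
          ∑ j ∈ Λ.erase i, V j * (‖ψ i - ψ j‖ ^ 2 / ‖x i - x j‖) * |dw ‖x i - x j‖| := h2
      _ ≤ A * ∑ j ∈ Λ.erase i,
          V j * (‖ψ i - ψ j‖ ^ 2 / ‖x i - x j‖) * |dw ‖x i - x j‖| :=
          mul_le_mul_of_nonneg_right h3 hnn
  unfold l2normSq h1semiSq
  rw [Finset.mul_sum]
  refine Finset.sum_le_sum fun i hi => ?_
  calc V i * ‖dGrad x V dw Λ ψ i‖ ^ 2
      ≤ V i * (A * ∑ j ∈ Λ.erase i,
          V j * (‖ψ i - ψ j‖ ^ 2 / ‖x i - x j‖) * |dw ‖x i - x j‖|) :=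
        mul_le_mul_of_nonneg_left (key i hi) (hV i).le
    _ = A * (V i * ∑ j ∈ Λ.erase i,
          V j * (‖ψ i - ψ j‖ ^ 2 / ‖x i - x j‖) * |dw ‖x i - x j‖|) := by ring
end
end

section
/- Let d ∈ {2,3}, let x_1,…,x_N be pairwise distinct points in ℝ^d with particle volumes V_1,…,V_N > 0, let w be a reference weight function, h > 0, ν > 0, Δt > 0, and δ ∈ (0,1). Assume the time step condition: Δt ≤ (δ/(2ν)) · (max_{i=1,…,N} Σ_{j≠i} V_j |ẇ_h(|x_i − x_j|)| / |x_i − x_j|)^{−1}. Then for every Λ ⊆ {1,…,N} and every φ : Λ → ℝ^d, the discrete Laplacian (Δφ)_i := 2 Σ_{j∈Λ, j≠i} V_j ((φ_i − φ_j)/|x_i − x_j|) ((x_i − x_j)/|x_i − x_j|)·∇w_h(|x_i − x_j|) satisfies ‖Δφ‖_{2,Λ}² ≤ (2δ/(Δt ν)) |φ|_{1,Λ}². -/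
open MeasureTheory Finset
open scoped BigOperators RealInnerProductSpace

noncomputable section

open ISPH

/-- under the time step condition, the discrete `L²` norm of the
discrete Laplacian is controlled by the discrete `H¹₀` seminorm. -/
theorem statement8 (d N : ℕ) (hd : d = 2 ∨ d = 3)
    (x : Fin N → Pt d) (hx : Function.Injective x)
    (V : Fin N → ℝ) (hV : ∀ i, 0 < V i)
    (w : ℝ → ℝ) (r₀ : ℝ) (hw : IsRefWeight d w r₀)
    (h : ℝ) (hh : 0 < h) (ν Δt δ : ℝ) (hν : 0 < ν) (hΔt : 0 < Δt)
    (hδ : 0 < δ) (hδ1 : δ < 1)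
    (hts : ∀ i, Δt * ∑ j ∈ Finset.univ.erase i,
      V j * (|dwh d h w ‖x i - x j‖| / ‖x i - x j‖) ≤ δ / (2 * ν)) :
    ∀ (Λ : Finset (Fin N)) (φ : Fin N → Pt d),
      l2normSq V Λ (dLap x V (dwh d h w) Λ φ) ≤
        (2 * δ / (Δt * ν)) * h1semiSq x V (dwh d h w) Λ φ := by
  intro Λ φ
  set dw := dwh d h w with hdwdef
  have hr : ∀ i j : Fin N, i ≠ j → (0:ℝ) < ‖x i - x j‖ := by
    intro i j hij
    rw [norm_pos_iff, sub_ne_zero]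
    exact fun e => hij (hx e)
  -- pointwise estimate
  have key : ∀ i, V i * ‖dLap x V dw Λ φ i‖ ^ 2 ≤
      (2 * δ / (Δt * ν)) * (V i * ∑ j ∈ Λ.erase i,
        V j * (‖φ i - φ j‖ ^ 2 / ‖x i - x j‖) * |dw ‖x i - x j‖|) := by
    intro i
    set a : Fin N → ℝ := fun j => V j * |dw ‖x i - x j‖| / ‖x i - x j‖ with ha
    have hanneg : ∀ j, 0 ≤ a j := fun j =>
      div_nonneg (mul_nonneg (hV j).le (abs_nonneg _)) (norm_nonneg _)
    -- norm bound on the Laplacian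
    have h0 : ‖∑ j ∈ Λ.erase i,
        ((V j / ‖x i - x j‖) * ⟪‖x i - x j‖⁻¹ • (x i - x j),
          gradW x dw i j⟫) • (φ i - φ j)‖ ≤
        ∑ j ∈ Λ.erase i, a j * ‖φ i - φ j‖ := by
      refine (norm_sum_le _ _).trans (Finset.sum_le_sum fun j hj => ?_)
      have hij : i ≠ j := (Finset.ne_of_mem_erase hj).symm
      have hrij := hr i j hij
      rw [norm_smul]
      have hcoef : (V j / ‖x i - x j‖) * ⟪‖x i - x j‖⁻¹ • (x i - x j),
          gradW x dw i j⟫ = V j * dw ‖x i - x j‖ / ‖x i - x j‖ := by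
        rw [gradW, real_inner_smul_left, real_inner_smul_right,
          real_inner_self_eq_norm_sq]
        field_simp
      rw [hcoef, Real.norm_eq_abs, abs_div, abs_mul, abs_of_pos (hV j),
        abs_of_pos hrij]
    have hnorm : ‖dLap x V dw Λ φ i‖ ≤
        2 * ∑ j ∈ Λ.erase i, a j * ‖φ i - φ j‖ := by
      rw [dLap, norm_smul, Real.norm_two]
      exact mul_le_mul_of_nonneg_left h0 two_pos.le
    -- Cauchy–Schwarz
    have hCS : (∑ j ∈ Λ.erase i, a j * ‖φ i - φ j‖) ^ 2 ≤
        (∑ j ∈ Λ.erase i, a j) * ∑ j ∈ Λ.erase i, a j * ‖φ i - φ j‖ ^ 2 :=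
      Finset.sum_sq_le_sum_mul_sum_of_sq_eq_mul _
        (fun j _ => hanneg j) (fun j _ => mul_nonneg (hanneg j) (sq_nonneg _))
        (fun j _ => by ring)
    -- time-step bound on the coefficient sum
    have hS : (∑ j ∈ Λ.erase i, a j) ≤ δ / (2 * ν) / Δt := by
      have h1 : (∑ j ∈ Λ.erase i, a j) ≤ ∑ j ∈ Finset.univ.erase i, a j :=
        Finset.sum_le_sum_of_subset_of_nonneg
          (Finset.erase_subset_erase i (Finset.subset_univ Λ))
          (fun j _ _ => hanneg j)
      have h2 : ∑ j ∈ Finset.univ.erase i, a j =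
          ∑ j ∈ Finset.univ.erase i,
            V j * (|dwh d h w ‖x i - x j‖| / ‖x i - x j‖) :=
        Finset.sum_congr rfl fun j _ => by
          show V j * |dw ‖x i - x j‖| / ‖x i - x j‖ = _
          rw [mul_div_assoc]
      have h3 := hts i
      have h4 : (∑ j ∈ Finset.univ.erase i, a j) ≤ δ / (2 * ν) / Δt := by
        rw [le_div_iff₀ hΔt, h2, mul_comm]
        exact h3
      exact h1.trans h4
    have hT0 : 0 ≤ ∑ j ∈ Λ.erase i, a j * ‖φ i - φ j‖ ^ 2 :=
      Finset.sum_nonneg fun j _ => mul_nonneg (hanneg j) (sq_nonneg _)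
    have hsum_eq : ∑ j ∈ Λ.erase i, a j * ‖φ i - φ j‖ ^ 2 =
        ∑ j ∈ Λ.erase i,
          V j * (‖φ i - φ j‖ ^ 2 / ‖x i - x j‖) * |dw ‖x i - x j‖| :=
      Finset.sum_congr rfl fun j _ => by rw [ha]; ring
    calc V i * ‖dLap x V dw Λ φ i‖ ^ 2
        ≤ V i * (2 * ∑ j ∈ Λ.erase i, a j * ‖φ i - φ j‖) ^ 2 :=
          mul_le_mul_of_nonneg_left
            (pow_le_pow_left₀ (norm_nonneg _) hnorm 2) (hV i).le
      _ = V i * 4 * (∑ j ∈ Λ.erase i, a j * ‖φ i - φ j‖) ^ 2 := by ring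
      _ ≤ V i * 4 * ((∑ j ∈ Λ.erase i, a j) *
            ∑ j ∈ Λ.erase i, a j * ‖φ i - φ j‖ ^ 2) :=
          mul_le_mul_of_nonneg_left hCS
            (mul_nonneg (hV i).le (by norm_num))
      _ ≤ V i * 4 * ((δ / (2 * ν) / Δt) *
            ∑ j ∈ Λ.erase i, a j * ‖φ i - φ j‖ ^ 2) :=
          mul_le_mul_of_nonneg_left
            (mul_le_mul_of_nonneg_right hS hT0) (mul_nonneg (hV i).le (by norm_num))
      _ = (2 * δ / (Δt * ν)) *
            (V i * ∑ j ∈ Λ.erase i, a j * ‖φ i - φ j‖ ^ 2) := by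
          field_simp
          ring
      _ = _ := by rw [hsum_eq]
  calc l2normSq V Λ (dLap x V dw Λ φ)
      ≤ ∑ i ∈ Λ, (2 * δ / (Δt * ν)) * (V i * ∑ j ∈ Λ.erase i,
        V j * (‖φ i - φ j‖ ^ 2 / ‖x i - x j‖) * |dw ‖x i - x j‖|) :=
        Finset.sum_le_sum fun i _ => key i
    _ = (2 * δ / (Δt * ν)) * h1semiSq x V dw Λ φ := by
        rw [h1semiSq, Finset.mul_sum]
end
end

section
/- Let d = 2, let x_1,…,x_N be pairwise distinct points in ℝ² with particle volumes V_1,…,V_N > 0, let w be a reference weight function, h > 0, ρ > 0, Δt > 0, c₀ > 0. Assume the semi-regularity condition max_i Σ_{j=1}^N V_j |x_i − x_j| |ẇ_h(|x_i − x_j|)| ≤ 2 + c₀ Δt. Let Λ = Λ_fl ∪ Λ_sf ⊆ {1,…,N} (disjoint union), let u* : Λ → ℝ², let p : Λ → ℝ satisfy p_i = 0 for i ∈ Λ_sf and (Δp)_i = (ρ/Δt)(∇·u*)_i for i ∈ Λ_fl (operators over Λ), and define the corrected velocity u_i := u*_i − (Δt/ρ)(∇p)_i for i ∈ Λ. Then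 ‖u‖_{2,Λ}² ≤ (1 + c₀(2 + c₀Δt)Δt) ‖u*‖_{2,Λ}². -/
open MeasureTheory Finset
open scoped BigOperators RealInnerProductSpace

noncomputable section

open ISPH

namespace ISPHAux
open ISPH

variable {d N : ℕ}

lemma gradW_self (x : Fin N → Pt d) (dw : ℝ → ℝ) (i : Fin N) : gradW x dw i i = 0 := by
  simp [gradW]

lemma gradW_antisymm (x : Fin N → Pt d) (dw : ℝ → ℝ) (i j : Fin N) :
    gradW x dw j i = - gradW x dw i j := by
  unfold gradW
  rw [norm_sub_rev, ← neg_sub (x i) (x j), smul_neg]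

lemma norm_gradW (x : Fin N → Pt d) (dw : ℝ → ℝ) (i j : Fin N) (hij : x i ≠ x j) :
    ‖gradW x dw i j‖ = |dw ‖x i - x j‖| := by
  have hr : (0:ℝ) < ‖x i - x j‖ := by
    rw [norm_pos_iff]; exact sub_ne_zero.mpr hij
  rw [gradW, norm_smul, Real.norm_eq_abs, abs_div, abs_of_pos hr]
  field_simp

lemma inner_unit_gradW (x : Fin N → Pt d) (dw : ℝ → ℝ) (i j : Fin N) (hij : x i ≠ x j) :
    ⟪‖x i - x j‖⁻¹ • (x i - x j), gradW x dw i j⟫ = dw ‖x i - x j‖ := by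
  have hr : (0:ℝ) < ‖x i - x j‖ := by
    rw [norm_pos_iff]; exact sub_ne_zero.mpr hij
  rw [gradW, real_inner_smul_left, real_inner_smul_right, real_inner_self_eq_norm_sq]
  field_simp

lemma sum_antisymm_zero {s : Finset (Fin N)} (f : Fin N → Fin N → ℝ)
    (hf : ∀ i j, f j i = - f i j) : ∑ i ∈ s, ∑ j ∈ s, f i j = 0 := by
  have h := Finset.sum_comm (s := s) (t := s) (f := fun i j => f i j)
  have h2 : ∑ j ∈ s, ∑ i ∈ s, f i j = - ∑ i ∈ s, ∑ j ∈ s, f i j := by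
    rw [← Finset.sum_neg_distrib]
    apply Finset.sum_congr rfl; intro j _
    rw [← Finset.sum_neg_distrib]
    apply Finset.sum_congr rfl; intro i _
    rw [hf]
  linarith


lemma dwh_nonpos {w : ℝ → ℝ} {r₀ : ℝ} (hw : IsRefWeight d w r₀) {h : ℝ} (hh : 0 < h)
    {r : ℝ} (hr : 0 < r) : dwh d h w r ≤ 0 := by
  have hrh : 0 < r / h := div_pos hr hh
  have hdiff : DifferentiableAt ℝ w (r / h) := by
    have := hw.smooth.contDiffAt (Ici_mem_nhds hrh)
    exact this.differentiableAt two_ne_zero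
  have h1 : HasDerivAt (fun s : ℝ => s / h) (1 / h) r := by
    simpa using (hasDerivAt_id r).div_const h
  have hderiv : HasDerivAt (fun s => w (s / h)) (deriv w (r / h) * (1 / h)) r :=
    (hdiff.hasDerivAt.comp r h1)
  have heq : dwh d h w r = (h ^ d)⁻¹ * (deriv w (r / h) * (1 / h)) := by
    unfold dwh wh
    rw [deriv_const_mul_field, hderiv.deriv]
  rw [heq]
  have hw' : deriv w (r / h) ≤ 0 := by
    rcases lt_or_ge (r / h) r₀ with hc | hc
    · exact (hw.deriv_neg _ hrh hc).le
    · exact (hw.deriv_eq_zero _ hc).le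
  have h1 : (0:ℝ) ≤ (h ^ d)⁻¹ := by positivity
  have h2 : (0:ℝ) ≤ 1 / h := by positivity
  have := mul_nonneg (mul_nonneg h1 (neg_nonneg.mpr hw')) h2
  nlinarith [this]

lemma sbp (x : Fin N → Pt d) (V : Fin N → ℝ) (dw : ℝ → ℝ) (Λ : Finset (Fin N))
    (p : Fin N → ℝ) (φ : Fin N → Pt d) :
    dInner V Λ (dGrad x V dw Λ p) φ = - ∑ i ∈ Λ, V i * p i * dDiv x V dw Λ φ i := by
  have key : dInner V Λ (dGrad x V dw Λ p) φ
      + ∑ i ∈ Λ, V i * p i * dDiv x V dw Λ φ i = 0 := by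
    unfold dInner dGrad dDiv
    simp_rw [sum_inner, real_inner_smul_left, Finset.mul_sum, ← Finset.sum_add_distrib]
    apply sum_antisymm_zero
    intro i j
    have hg := gradW_antisymm x dw i j
    simp only [hg, inner_neg_left, inner_neg_right, inner_add_left]
    rw [real_inner_comm (φ i) (gradW x dw i j), real_inner_comm (φ j) (gradW x dw i j)]
    ring
  linarith [key]

lemma dLap_eq (x : Fin N → Pt d) (hx : Function.Injective x) (V : Fin N → ℝ)
    (dw : ℝ → ℝ) (Λ : Finset (Fin N)) (p : Fin N → ℝ) (i : Fin N) :
    dLap x V dw Λ p i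
      = ∑ j ∈ Λ, 2 * V j * (dw ‖x i - x j‖ / ‖x i - x j‖) * (p i - p j) := by
  unfold dLap
  rw [smul_eq_mul, Finset.mul_sum]
  rw [← Finset.sum_erase Λ (f := fun j => 2 * V j * (dw ‖x i - x j‖ / ‖x i - x j‖) * (p i - p j))
    (a := i) (by simp)]
  apply Finset.sum_congr rfl
  intro j hj
  have hji : j ≠ i := Finset.ne_of_mem_erase hj
  have hxij : x i ≠ x j := fun hc => hji (hx hc).symm
  rw [smul_eq_mul, inner_unit_gradW x dw i j hxij]
  ring

lemma lap_energy (x : Fin N → Pt d) (hx : Function.Injective x) (V : Fin N → ℝ)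
    (dw : ℝ → ℝ) (hdw : ∀ r : ℝ, 0 < r → dw r ≤ 0)
    (Λ : Finset (Fin N)) (p : Fin N → ℝ) :
    ∑ i ∈ Λ, V i * p i * dLap x V dw Λ p i = - h1semiSq x V dw Λ p := by
  have hL : ∑ i ∈ Λ, V i * p i * dLap x V dw Λ p i
      = ∑ i ∈ Λ, ∑ j ∈ Λ,
        2 * (V i * V j * (dw ‖x i - x j‖ / ‖x i - x j‖)) * (p i * (p i - p j)) := by
    apply Finset.sum_congr rfl
    intro i _
    rw [dLap_eq x hx V dw Λ p i, Finset.mul_sum]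
    apply Finset.sum_congr rfl
    intro j _
    ring
  have hR : h1semiSq x V dw Λ p
      = ∑ i ∈ Λ, ∑ j ∈ Λ,
        -(V i * V j * (dw ‖x i - x j‖ / ‖x i - x j‖)) * (p i - p j) ^ 2 := by
    unfold h1semiSq
    apply Finset.sum_congr rfl
    intro i _
    rw [Finset.mul_sum]
    rw [← Finset.sum_erase Λ
      (f := fun j => -(V i * V j * (dw ‖x i - x j‖ / ‖x i - x j‖)) * (p i - p j) ^ 2)
      (a := i) (by simp)]
    apply Finset.sum_congr rfl
    intro j hj
    have hji : j ≠ i := Finset.ne_of_mem_erase hj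
    have hxij : x i ≠ x j := fun hc => hji (hx hc).symm
    have hr : (0:ℝ) < ‖x i - x j‖ := by
      rw [norm_pos_iff]; exact sub_ne_zero.mpr hxij
    have habs : |dw ‖x i - x j‖| = -(dw ‖x i - x j‖) := abs_of_nonpos (hdw _ hr)
    rw [habs]
    rw [Real.norm_eq_abs, sq_abs]
    ring
  have key : (∑ i ∈ Λ, V i * p i * dLap x V dw Λ p i) + h1semiSq x V dw Λ p = 0 := by
    rw [hL, hR, ← Finset.sum_add_distrib]
    simp_rw [← Finset.sum_add_distrib]
    apply sum_antisymm_zero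
    intro i j
    rw [norm_sub_rev (x j) (x i)]
    ring
  linarith [key]

lemma h1semiSq_nonneg (x : Fin N → Pt d) (V : Fin N → ℝ) (hV : ∀ i, 0 ≤ V i)
    (dw : ℝ → ℝ) (Λ : Finset (Fin N)) (p : Fin N → ℝ) :
    0 ≤ h1semiSq x V dw Λ p := by
  apply Finset.sum_nonneg
  intro i _
  apply mul_nonneg (hV i)
  apply Finset.sum_nonneg
  intro j _
  exact mul_nonneg (mul_nonneg (hV j)
    (div_nonneg (by positivity) (norm_nonneg _))) (abs_nonneg _)

lemma dinner_sq_le {F : Type*} [NormedAddCommGroup F] [InnerProductSpace ℝ F]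
    (V : Fin N → ℝ) (hV : ∀ i, 0 ≤ V i) (Λ : Finset (Fin N)) (φ ψ : Fin N → F) :
    (dInner V Λ φ ψ) ^ 2 ≤ l2normSq V Λ φ * l2normSq V Λ ψ := by
  have h1 : |dInner V Λ φ ψ|
      ≤ ∑ i ∈ Λ, (Real.sqrt (V i) * ‖φ i‖) * (Real.sqrt (V i) * ‖ψ i‖) := by
    refine (Finset.abs_sum_le_sum_abs _ _).trans (Finset.sum_le_sum ?_)
    intro i _
    rw [abs_mul, abs_of_nonneg (hV i)]
    calc V i * |⟪φ i, ψ i⟫| ≤ V i * (‖φ i‖ * ‖ψ i‖) :=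
          mul_le_mul_of_nonneg_left (abs_real_inner_le_norm _ _) (hV i)
      _ = _ := by rw [mul_mul_mul_comm, Real.mul_self_sqrt (hV i)]
  have h2 := Finset.sum_mul_sq_le_sq_mul_sq Λ (fun i => Real.sqrt (V i) * ‖φ i‖)
      (fun i => Real.sqrt (V i) * ‖ψ i‖)
  have h3 : ∑ i ∈ Λ, (Real.sqrt (V i) * ‖φ i‖) ^ 2 = l2normSq V Λ φ := by
    apply Finset.sum_congr rfl; intro i _
    rw [mul_pow, Real.sq_sqrt (hV i)]
  have h4 : ∑ i ∈ Λ, (Real.sqrt (V i) * ‖ψ i‖) ^ 2 = l2normSq V Λ ψ := by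
    apply Finset.sum_congr rfl; intro i _
    rw [mul_pow, Real.sq_sqrt (hV i)]
  calc (dInner V Λ φ ψ) ^ 2 = |dInner V Λ φ ψ| ^ 2 := (sq_abs _).symm
    _ ≤ (∑ i ∈ Λ, (Real.sqrt (V i) * ‖φ i‖) * (Real.sqrt (V i) * ‖ψ i‖)) ^ 2 :=
        pow_le_pow_left₀ (abs_nonneg _) h1 2
    _ ≤ _ := h2.trans_eq (by rw [h3, h4])

lemma grad_bound (x : Fin N → Pt d) (hx : Function.Injective x) (V : Fin N → ℝ)
    (hV : ∀ i, 0 ≤ V i) (dw : ℝ → ℝ) (Λ : Finset (Fin N)) (p : Fin N → ℝ) (B : ℝ)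
    (hB : ∀ i, ∑ j : Fin N, V j * ‖x i - x j‖ * |dw ‖x i - x j‖| ≤ B) :
    l2normSq V Λ (dGrad x V dw Λ p) ≤ B * h1semiSq x V dw Λ p := by
  set Q : Fin N → ℝ := fun i =>
    ∑ j ∈ Λ, V j * ((p i - p j) ^ 2 / ‖x i - x j‖) * |dw ‖x i - x j‖| with hQdef
  have hQnn : ∀ i, 0 ≤ Q i := by
    intro i
    apply Finset.sum_nonneg
    intro j _
    exact mul_nonneg (mul_nonneg (hV j)
      (div_nonneg (sq_nonneg _) (norm_nonneg _))) (abs_nonneg _)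
  have hmain : ∀ i ∈ Λ, ‖dGrad x V dw Λ p i‖ ^ 2 ≤ B * Q i := by
    intro i _
    have hS : ‖dGrad x V dw Λ p i‖
        ≤ ∑ j ∈ Λ, V j * |p i - p j| * |dw ‖x i - x j‖| := by
      refine (norm_sum_le _ _).trans (Finset.sum_le_sum ?_)
      intro j _
      rw [norm_smul, Real.norm_eq_abs, abs_mul, abs_of_nonneg (hV j), abs_sub_comm (p j)]
      rcases eq_or_ne j i with rfl | hji
      · simp [gradW_self]
      · rw [norm_gradW x dw i j (fun hc => hji (hx hc).symm)]
    have hT : ∑ j ∈ Λ, V j * ‖x i - x j‖ * |dw ‖x i - x j‖| ≤ B := by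
      refine le_trans ?_ (hB i)
      apply Finset.sum_le_sum_of_subset_of_nonneg (Finset.subset_univ Λ)
      intro j _ _
      exact mul_nonneg (mul_nonneg (hV j) (norm_nonneg _)) (abs_nonneg _)
    have hTnn : (0:ℝ) ≤ ∑ j ∈ Λ, V j * ‖x i - x j‖ * |dw ‖x i - x j‖| := by
      apply Finset.sum_nonneg
      intro j _
      exact mul_nonneg (mul_nonneg (hV j) (norm_nonneg _)) (abs_nonneg _)
    have hcs : (∑ j ∈ Λ, V j * |p i - p j| * |dw ‖x i - x j‖|) ^ 2
        ≤ Q i * ∑ j ∈ Λ, V j * ‖x i - x j‖ * |dw ‖x i - x j‖| := by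
      have heq : ∑ j ∈ Λ, V j * |p i - p j| * |dw ‖x i - x j‖|
          = ∑ j ∈ Λ, Real.sqrt (V j * ((p i - p j) ^ 2 / ‖x i - x j‖) * |dw ‖x i - x j‖|)
              * Real.sqrt (V j * ‖x i - x j‖ * |dw ‖x i - x j‖|) := by
        apply Finset.sum_congr rfl
        intro j _
        have hA : (0:ℝ) ≤ V j * ((p i - p j) ^ 2 / ‖x i - x j‖) * |dw ‖x i - x j‖| :=
          mul_nonneg (mul_nonneg (hV j)
            (div_nonneg (sq_nonneg _) (norm_nonneg _))) (abs_nonneg _)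
        rw [← Real.sqrt_mul hA]
        rcases eq_or_ne j i with rfl | hji
        · simp
        · have hr : (0:ℝ) < ‖x i - x j‖ := by
            rw [norm_pos_iff]
            exact sub_ne_zero.mpr (fun hc => hji (hx hc).symm)
          have : V j * ((p i - p j) ^ 2 / ‖x i - x j‖) * |dw ‖x i - x j‖|
              * (V j * ‖x i - x j‖ * |dw ‖x i - x j‖|)
              = (V j * |p i - p j| * |dw ‖x i - x j‖|) ^ 2 := by
            rw [mul_pow, mul_pow, sq_abs (p i - p j)]
            field_simp
          rw [this, Real.sqrt_sq (mul_nonneg (mul_nonneg (hV j) (abs_nonneg _)) (abs_nonneg _))]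
      rw [heq]
      have h2 := Finset.sum_mul_sq_le_sq_mul_sq Λ
        (fun j => Real.sqrt (V j * ((p i - p j) ^ 2 / ‖x i - x j‖) * |dw ‖x i - x j‖|))
        (fun j => Real.sqrt (V j * ‖x i - x j‖ * |dw ‖x i - x j‖|))
      refine h2.trans_eq ?_
      congr 1
      · apply Finset.sum_congr rfl
        intro j _
        exact Real.sq_sqrt (mul_nonneg (mul_nonneg (hV j)
          (div_nonneg (sq_nonneg _) (norm_nonneg _))) (abs_nonneg _))
      · apply Finset.sum_congr rfl
        intro j _
        exact Real.sq_sqrt (mul_nonneg (mul_nonneg (hV j) (norm_nonneg _)) (abs_nonneg _))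
    calc ‖dGrad x V dw Λ p i‖ ^ 2
        ≤ (∑ j ∈ Λ, V j * |p i - p j| * |dw ‖x i - x j‖|) ^ 2 :=
          pow_le_pow_left₀ (norm_nonneg _) hS 2
      _ ≤ Q i * ∑ j ∈ Λ, V j * ‖x i - x j‖ * |dw ‖x i - x j‖| := hcs
      _ ≤ Q i * B := mul_le_mul_of_nonneg_left hT (hQnn i)
      _ = B * Q i := mul_comm _ _
  have hsum : l2normSq V Λ (dGrad x V dw Λ p) ≤ B * ∑ i ∈ Λ, V i * Q i := by
    rw [Finset.mul_sum]
    apply Finset.sum_le_sum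
    intro i hi
    calc V i * ‖dGrad x V dw Λ p i‖ ^ 2 ≤ V i * (B * Q i) :=
          mul_le_mul_of_nonneg_left (hmain i hi) (hV i)
      _ = B * (V i * Q i) := by ring
  refine hsum.trans_eq ?_
  unfold h1semiSq
  congr 1
  apply Finset.sum_congr rfl
  intro i _
  congr 1
  rw [Finset.sum_erase Λ
    (f := fun j => V j * (‖p i - p j‖ ^ 2 / ‖x i - x j‖) * |dw ‖x i - x j‖|)
    (a := i) (by simp)]
  simp only [hQdef]
  apply Finset.sum_congr rfl
  intro j _
  rw [Real.norm_eq_abs, sq_abs]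

end ISPHAux


/-- under the semi-regularity condition (d = 2), the corrected velocity
of the ISPH projection step is bounded in the discrete `L²` norm by the predicted
velocity. -/
theorem statement10 (N : ℕ)
    (x : Fin N → Pt 2) (hx : Function.Injective x)
    (V : Fin N → ℝ) (hV : ∀ i, 0 < V i)
    (w : ℝ → ℝ) (r₀ : ℝ) (hw : IsRefWeight 2 w r₀)
    (h : ℝ) (hh : 0 < h) (ρ Δt c₀ : ℝ) (hρ : 0 < ρ) (hΔt : 0 < Δt) (hc₀ : 0 < c₀)
    (hreg : ∀ i, ∑ j : Fin N,
      V j * ‖x i - x j‖ * |dwh 2 h w ‖x i - x j‖| ≤ 2 + c₀ * Δt)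
    (Λfl Λsf : Finset (Fin N)) (hdisj : Disjoint Λfl Λsf)
    (ustar u : Fin N → Pt 2) (p : Fin N → ℝ)
    (hpsf : ∀ i ∈ Λsf, p i = 0)
    (hpois : ∀ i ∈ Λfl, dLap x V (dwh 2 h w) (Λfl ∪ Λsf) p i =
      (ρ / Δt) * dDiv x V (dwh 2 h w) (Λfl ∪ Λsf) ustar i)
    (hu : ∀ i ∈ Λfl ∪ Λsf,
      u i = ustar i - (Δt / ρ) • dGrad x V (dwh 2 h w) (Λfl ∪ Λsf) p i) :
    l2normSq V (Λfl ∪ Λsf) u ≤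
      (1 + c₀ * (2 + c₀ * Δt) * Δt) * l2normSq V (Λfl ∪ Λsf) ustar :=  by
  classical
  set Λ : Finset (Fin N) := Λfl ∪ Λsf with hΛ
  set dw : ℝ → ℝ := dwh 2 h w with hdwdef
  set c : ℝ := Δt / ρ with hc
  have hcpos : 0 < c := div_pos hΔt hρ
  have hVnn : ∀ i, 0 ≤ V i := fun i => (hV i).le
  have hdw : ∀ r : ℝ, 0 < r → dw r ≤ 0 := fun r hr => ISPHAux.dwh_nonpos hw hh hr
  set g : Fin N → Pt 2 := dGrad x V dw Λ p with hg
  set E : ℝ := h1semiSq x V dw Λ p with hE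
  set G : ℝ := l2normSq V Λ g with hG
  set U : ℝ := l2normSq V Λ ustar with hU
  have hE0 : 0 ≤ E := ISPHAux.h1semiSq_nonneg x V hVnn dw Λ p
  have hU0 : 0 ≤ U := by
    apply Finset.sum_nonneg
    intro i _
    exact mul_nonneg (hVnn i) (sq_nonneg _)
  have hBpos : (0:ℝ) < 2 + c₀ * Δt := by positivity
  -- key1 : dInner g ustar = c * E
  have key1 : dInner V Λ g ustar = c * E := by
    have hsbp := ISPHAux.sbp x V dw Λ p ustar
    have hsf0 : ∀ S : Finset (Fin N), (∀ i ∈ S, p i = 0) →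
        ∀ f : Fin N → ℝ, ∑ i ∈ S, V i * p i * f i = 0 := by
      intro S hS f
      apply Finset.sum_eq_zero
      intro i hi
      rw [hS i hi]; ring
    have hsplit : ∑ i ∈ Λ, V i * p i * dDiv x V dw Λ ustar i
        = ∑ i ∈ Λfl, V i * p i * dDiv x V dw Λ ustar i := by
      rw [hΛ, Finset.sum_union hdisj, hsf0 Λsf hpsf, add_zero]
    have hfl : ∑ i ∈ Λfl, V i * p i * dDiv x V dw Λ ustar i
        = c * ∑ i ∈ Λfl, V i * p i * dLap x V dw Λ p i := by
      rw [Finset.mul_sum]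
      apply Finset.sum_congr rfl
      intro i hi
      have h1 := hpois i hi
      have h2 : dDiv x V dw Λ ustar i = c * dLap x V dw Λ p i := by
        rw [h1, hc]
        field_simp
      rw [h2]; ring
    have hlapfull : ∑ i ∈ Λfl, V i * p i * dLap x V dw Λ p i
        = ∑ i ∈ Λ, V i * p i * dLap x V dw Λ p i := by
      rw [hΛ, Finset.sum_union hdisj, hsf0 Λsf hpsf, add_zero]
    have hle := ISPHAux.lap_energy x hx V dw hdw Λ p
    rw [hsbp, hsplit, hfl, hlapfull, hle]
    ring
  -- key2 : G ≤ (2 + c₀Δt) E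
  have key2 : G ≤ (2 + c₀ * Δt) * E :=
    ISPHAux.grad_bound x hx V hVnn dw Λ p (2 + c₀ * Δt) hreg
  have hG0 : 0 ≤ G := by
    apply Finset.sum_nonneg
    intro i _
    exact mul_nonneg (hVnn i) (sq_nonneg _)
  -- key3
  have key3 : (c * E) ^ 2 ≤ G * U := by
    rw [← key1]
    exact ISPHAux.dinner_sq_le V hVnn Λ g ustar
  have key4 : c ^ 2 * E ≤ (2 + c₀ * Δt) * U := by
    rcases eq_or_lt_of_le hE0 with hEz | hEp
    · rw [← hEz]
      have : (0:ℝ) ≤ (2 + c₀ * Δt) * U := mul_nonneg hBpos.le hU0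
      simpa using this
    · have h1 : (c * E) ^ 2 ≤ ((2 + c₀ * Δt) * E) * U :=
        key3.trans (mul_le_mul_of_nonneg_right key2 hU0)
      nlinarith [hEp, h1]
  -- expansion
  have hexp : l2normSq V Λ u = U - 2 * c * dInner V Λ g ustar + c ^ 2 * G := by
    have hterm : ∀ i ∈ Λ, V i * ‖u i‖ ^ 2
        = V i * ‖ustar i‖ ^ 2 - 2 * c * (V i * ⟪g i, ustar i⟫) + c ^ 2 * (V i * ‖g i‖ ^ 2) := by
      intro i hi
      rw [hu i hi, @norm_sub_sq_real, real_inner_smul_right,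
        norm_smul, Real.norm_eq_abs, mul_pow, sq_abs, real_inner_comm (ustar i) (g i)]
      ring
    unfold l2normSq dInner
    rw [Finset.sum_congr rfl hterm, Finset.sum_add_distrib, Finset.sum_sub_distrib,
      ← Finset.mul_sum, ← Finset.mul_sum]
    simp only [hU, hG, l2normSq]
  rw [hexp, key1]
  have h5 : c ^ 2 * G ≤ c ^ 2 * ((2 + c₀ * Δt) * E) :=
    mul_le_mul_of_nonneg_left key2 (sq_nonneg c)
  have h6 : c₀ * Δt * (c ^ 2 * E) ≤ c₀ * Δt * ((2 + c₀ * Δt) * U) :=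
    mul_le_mul_of_nonneg_left key4 (by positivity)
  nlinarith [h5, h6, hE0, hU0]
end
end

section
/- Let d ∈ {2,3} and let w be the cubic B-spline reference weight function on ℝ^d: w(r) = C(1 − (3/2)r² + (3/4)r³) for 0 ≤ r < 1, w(r) = (C/4)(2 − r)³ for 1 ≤ r < 2, and w(r) = 0 for r ≥ 2, where C = 10/(7π) if d = 2 and C = 1/π if d = 3. Then (1/2)(∫_{ℝ^d} |ẇ(|y|)| / |y| dy)^{−1} equals 7/40 when d = 2 and equals 1/6 when d = 3. -/
open MeasureTheory Finset
open scoped BigOperators RealInnerProductSpace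

noncomputable section

open ISPH

namespace Aux18




section Aux

variable (Cc : ℝ) (w : ℝ → ℝ)
  (hw : ∀ r : ℝ, 0 ≤ r → w r =
      if r < 1 then Cc * (1 - 3 / 2 * r ^ 2 + 3 / 4 * r ^ 3)
      else if r < 2 then Cc / 4 * (2 - r) ^ 3
      else 0)

include hw

lemma deriv_w1 {r : ℝ} (h0 : 0 < r) (h1 : r < 1) :
    deriv w r = Cc * (9 / 4 * r ^ 2 - 3 * r) := by
  have hev : w =ᶠ[nhds r] fun s => Cc * (1 - 3 / 2 * s ^ 2 + 3 / 4 * s ^ 3) := by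
    filter_upwards [Ioo_mem_nhds h0 h1] with s hs
    rw [hw s hs.1.le, if_pos hs.2]
  rw [hev.deriv_eq]
  have h : HasDerivAt (fun s : ℝ => Cc * (1 - 3 / 2 * s ^ 2 + 3 / 4 * s ^ 3))
      (Cc * (9 / 4 * r ^ 2 - 3 * r)) r := by
    have h2 := hasDerivAt_pow 2 r
    have h3 := hasDerivAt_pow 3 r
    have := (((h2.const_mul (3 / 2 : ℝ)).const_sub 1).add (h3.const_mul (3 / 4 : ℝ))).const_mul Cc
    exact this.congr_deriv (by push_cast; ring)
  exact h.deriv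

lemma deriv_w2 {r : ℝ} (h0 : 1 < r) (h1 : r < 2) :
    deriv w r = -(3 * Cc / 4) * (2 - r) ^ 2 := by
  have hev : w =ᶠ[nhds r] fun s => Cc / 4 * (2 - s) ^ 3 := by
    filter_upwards [Ioo_mem_nhds h0 h1] with s hs
    rw [hw s (by linarith [hs.1]), if_neg (by linarith [hs.1]), if_pos hs.2]
  rw [hev.deriv_eq]
  have h : HasDerivAt (fun s : ℝ => Cc / 4 * (2 - s) ^ 3) (-(3 * Cc / 4) * (2 - r) ^ 2) r := by
    have h1' : HasDerivAt (fun s : ℝ => 2 - s) (-1 : ℝ) r := by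
      simpa using (hasDerivAt_id r).const_sub 2
    have := (h1'.pow 3).const_mul (Cc / 4)
    exact this.congr_deriv (by push_cast; ring)
  exact h.deriv

lemma deriv_w3 {r : ℝ} (h0 : 2 < r) : deriv w r = 0 := by
  have hev : w =ᶠ[nhds r] fun _ => (0 : ℝ) := by
    filter_upwards [Ioi_mem_nhds h0] with s hs
    rw [hw s (by linarith [Set.mem_Ioi.mp hs]), if_neg (by simp at hs ⊢; linarith),
      if_neg (by simp at hs ⊢; linarith)]
  rw [hev.deriv_eq, deriv_const]

end Aux

section Radial

variable {Cc : ℝ} {w : ℝ → ℝ}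

/-- The radial integrand after polar coordinates, for dimension `m+1`. -/
noncomputable def Gfun (m : ℕ) (Cc : ℝ) : ℝ → ℝ := fun y =>
  if y ≤ 1 then Cc * (3 * y ^ m - 9 / 4 * y ^ (m + 1))
  else if y ≤ 2 then 3 * Cc / 4 * y ^ (m - 1) * (2 - y) ^ 2 else 0

lemma Gfun_cont (m : ℕ) (Cc : ℝ) (hm : 1 ≤ m) : Continuous (Gfun m Cc) := by
  unfold Gfun
  apply Continuous.if_le
  · fun_prop
  · apply Continuous.if_le
    · fun_prop
    · exact continuous_const
    · exact continuous_id
    · exact continuous_const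
    · intro y hy; simp [hy]
  · exact continuous_id
  · exact continuous_const
  · intro y hy
    subst hy
    obtain ⟨k, rfl⟩ := Nat.exists_eq_add_of_le' hm
    norm_num
    ring

lemma ae_eq_G (hC : 0 ≤ Cc)
    (hw : ∀ r : ℝ, 0 ≤ r → w r =
      if r < 1 then Cc * (1 - 3 / 2 * r ^ 2 + 3 / 4 * r ^ 3)
      else if r < 2 then Cc / 4 * (2 - r) ^ 3
      else 0) (m : ℕ) (hm : 1 ≤ m) :
    ∫ y in Set.Ioi (0 : ℝ), y ^ m • (|deriv w y| / y) = ∫ y in Set.Ioi (0 : ℝ), Gfun m Cc y := by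
  have h1 : ∀ᵐ y : ℝ, y ≠ (1 : ℝ) :=
    ae_iff.mpr (by simp [Set.setOf_eq_eq_singleton'])
  have h2 : ∀ᵐ y : ℝ, y ≠ (2 : ℝ) :=
    ae_iff.mpr (by simp [Set.setOf_eq_eq_singleton'])
  apply setIntegral_congr_ae measurableSet_Ioi
  filter_upwards [h1, h2] with y hy1 hy2 hy0
  have hy0' : (0 : ℝ) < y := hy0
  have hkey : y ^ m • (|deriv w y| / y) = y ^ (m - 1) * |deriv w y| := by
    obtain ⟨k, rfl⟩ := Nat.exists_eq_add_of_le' hm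
    rw [smul_eq_mul]
    field_simp
    ring
    rw [Nat.add_sub_cancel_left]
  rw [hkey]
  rcases lt_trichotomy y 1 with hlt | heq | hgt
  · rw [deriv_w1 Cc w hw hy0' hlt, Gfun, if_pos hlt.le,
      abs_of_nonpos (by nlinarith [mul_nonneg hC (show (0:ℝ) ≤ 3*y - 9/4*y^2 by nlinarith)])]
    obtain ⟨k, rfl⟩ := Nat.exists_eq_add_of_le' hm
    simp only [Nat.add_sub_cancel]  -- (k+1)-1 = k
    ring
  · exact absurd heq hy1
  · rcases lt_trichotomy y 2 with hlt2 | heq2 | hgt2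
    · rw [deriv_w2 Cc w hw hgt hlt2, Gfun, if_neg (by linarith), if_pos hlt2.le,
        abs_of_nonpos (by nlinarith)]
      ring
    · exact absurd heq2 hy2
    · rw [deriv_w3 Cc w hw hgt2, Gfun, if_neg (by linarith), if_neg (by linarith)]
      simp

lemma integral_G (m : ℕ) (Cc : ℝ) (hm : 1 ≤ m)
    (P Q : ℝ → ℝ)
    (hP : ∀ y : ℝ, HasDerivAt P (Cc * (3 * y ^ m - 9 / 4 * y ^ (m + 1))) y)
    (hQ : ∀ y : ℝ, HasDerivAt Q (3 * Cc / 4 * y ^ (m - 1) * (2 - y) ^ 2) y) :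
    ∫ y in Set.Ioi (0 : ℝ), Gfun m Cc y = (P 1 - P 0) + (Q 2 - Q 1) := by
  have hcont := Gfun_cont m Cc hm
  have hIoi : Set.Ioc (0 : ℝ) 2 ∪ Set.Ioi 2 = Set.Ioi 0 := Set.Ioc_union_Ioi_eq_Ioi (by norm_num)
  have hzero : Set.EqOn (Gfun m Cc) 0 (Set.Ioi 2) := by
    intro y hy
    simp only [Set.mem_Ioi] at hy
    simp [Gfun, not_le.mpr (by linarith : (1:ℝ) < y), not_le.mpr hy, Pi.zero_apply]
  rw [← hIoi, setIntegral_union (Set.Ioc_disjoint_Ioi le_rfl) measurableSet_Ioi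
      (hcont.integrableOn_Ioc)
      ((integrableOn_congr_fun hzero measurableSet_Ioi).mpr (integrableOn_zero)),
    setIntegral_congr_fun measurableSet_Ioi hzero]
  simp only [Pi.zero_apply, integral_zero, add_zero]
  rw [← intervalIntegral.integral_of_le (by norm_num : (0:ℝ) ≤ 2),
    ← intervalIntegral.integral_add_adjacent_intervals (a := (0:ℝ)) (b := 1) (c := 2)
      (hcont.intervalIntegrable 0 1) (hcont.intervalIntegrable 1 2)]
  have e1 : ∫ y in (0:ℝ)..1, Gfun m Cc y
      = ∫ y in (0:ℝ)..1, Cc * (3 * y ^ m - 9 / 4 * y ^ (m + 1)) := by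
    apply intervalIntegral.integral_congr
    intro y hy
    rw [Set.uIcc_of_le (by norm_num)] at hy
    simp [Gfun, hy.2]
  have e2 : ∫ y in (1:ℝ)..2, Gfun m Cc y
      = ∫ y in (1:ℝ)..2, 3 * Cc / 4 * y ^ (m - 1) * (2 - y) ^ 2 := by
    apply intervalIntegral.integral_congr
    intro y hy
    rw [Set.uIcc_of_le (by norm_num)] at hy
    by_cases h1 : y ≤ 1
    · have : y = 1 := le_antisymm h1 hy.1
      subst this
      obtain ⟨k, rfl⟩ := Nat.exists_eq_add_of_le' hm
      simp [Gfun]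
      ring
    · simp [Gfun, h1, hy.2]
  rw [e1, e2,
    intervalIntegral.integral_eq_sub_of_hasDerivAt (fun y _ => hP y)
      ((by fun_prop : Continuous fun y : ℝ => Cc * (3 * y ^ m - 9 / 4 * y ^ (m + 1))).intervalIntegrable 0 1),
    intervalIntegral.integral_eq_sub_of_hasDerivAt (fun y _ => hQ y)
      ((by fun_prop : Continuous fun y : ℝ => 3 * Cc / 4 * y ^ (m - 1) * (2 - y) ^ 2).intervalIntegrable 1 2)]

end Radial

section Assemble

lemma polar_int (n : ℕ) [Nonempty (Fin n)] (f : ℝ → ℝ) :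
    ∫ y : EuclideanSpace ℝ (Fin n), f ‖y‖
      = n • (volume (Metric.ball (0 : EuclideanSpace ℝ (Fin n)) 1)).toReal •
          ∫ y in Set.Ioi (0:ℝ), y ^ (n - 1) • f y := by
  rw [integral_fun_norm_addHaar volume f]
  simp [finrank_euclideanSpace_fin, Measure.real]

lemma vol_ball_two : (volume (Metric.ball (0 : EuclideanSpace ℝ (Fin 2)) 1)).toReal = Real.pi := by
  rw [EuclideanSpace.volume_ball]
  have h1 : ((2 : ℕ) : ℝ) / 2 + 1 = 2 := by norm_num
  simp only [Fintype.card_fin, h1, Real.Gamma_two,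
    Real.sq_sqrt Real.pi_nonneg, div_one, ENNReal.ofReal_one, one_pow, one_mul]
  exact ENNReal.toReal_ofReal Real.pi_nonneg

lemma vol_ball_three :
    (volume (Metric.ball (0 : EuclideanSpace ℝ (Fin 3)) 1)).toReal = 4 / 3 * Real.pi := by
  rw [EuclideanSpace.volume_ball]
  have hs : Real.sqrt Real.pi ≠ 0 := by
    positivity
  have hG : Real.Gamma (((3 : ℕ) : ℝ) / 2 + 1) = 3 / 4 * Real.sqrt Real.pi := by
    have h32 : ((3 : ℕ) : ℝ) / 2 + 1 = 3 / 2 + 1 := by norm_num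
    rw [h32, Real.Gamma_add_one (by norm_num)]
    have : (3 : ℝ) / 2 = 1 / 2 + 1 := by norm_num
    rw [this, Real.Gamma_add_one (by norm_num), Real.Gamma_one_half_eq]
    ring
  have hval : Real.sqrt Real.pi ^ 3 / Real.Gamma (((3 : ℕ) : ℝ) / 2 + 1)
      = 4 / 3 * Real.pi := by
    rw [hG]
    have h3 : Real.sqrt Real.pi ^ 3 = Real.pi * Real.sqrt Real.pi := by
      rw [pow_succ, Real.sq_sqrt Real.pi_nonneg]
    rw [h3]
    field_simp
  simp only [Fintype.card_fin, hval, ENNReal.ofReal_one, one_pow, one_mul]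
  exact ENNReal.toReal_ofReal (by positivity)

end Assemble

end Aux18


/-- the continuum time-step coefficient of the cubic B-spline
reference weight function is `7/40` in dimension 2 and `1/6` in dimension 3. -/
theorem statement18 (d : ℕ) (hd : d = 2 ∨ d = 3) (C : ℝ)
    (hC2 : d = 2 → C = 10 / (7 * Real.pi))
    (hC3 : d = 3 → C = 1 / Real.pi)
    (w : ℝ → ℝ)
    (hw : ∀ r : ℝ, 0 ≤ r → w r =
      if r < 1 then C * (1 - 3 / 2 * r ^ 2 + 3 / 4 * r ^ 3)
      else if r < 2 then C / 4 * (2 - r) ^ 3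
      else 0) :
    (d = 2 → (1 / 2) * (∫ y : Pt 2, |deriv w ‖y‖| / ‖y‖)⁻¹ = 7 / 40) ∧
    (d = 3 → (1 / 2) * (∫ y : Pt 3, |deriv w ‖y‖| / ‖y‖)⁻¹ = 1 / 6) := by
  have hpi := Real.pi_ne_zero
  constructor
  · intro h2
    have hC := hC2 h2
    have hCnn : 0 ≤ C := by rw [hC]; positivity
    have hP : ∀ y : ℝ, HasDerivAt (fun y : ℝ => C * (3 / 2 * y ^ 2 - 3 / 4 * y ^ 3))
        (C * (3 * y ^ 1 - 9 / 4 * y ^ (1 + 1))) y := by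
      intro y
      have := (((hasDerivAt_pow 2 y).const_mul (3 / 2 : ℝ)).sub
        ((hasDerivAt_pow 3 y).const_mul (3 / 4 : ℝ))).const_mul C
      exact this.congr_deriv (by push_cast; ring)
    have hQ : ∀ y : ℝ, HasDerivAt (fun y : ℝ => -(C / 4) * (2 - y) ^ 3)
        (3 * C / 4 * y ^ (1 - 1) * (2 - y) ^ 2) y := by
      intro y
      have h1' : HasDerivAt (fun s : ℝ => 2 - s) (-1 : ℝ) y := by
        simpa using (hasDerivAt_id y).const_sub 2
      have := (h1'.pow 3).const_mul (-(C / 4))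
      exact this.congr_deriv (by push_cast; ring)
    have key : (∫ y in Set.Ioi (0:ℝ), y ^ (2 - 1) • ((fun r => |deriv w r| / r) y)) = C := by
      show (∫ y in Set.Ioi (0:ℝ), y ^ 1 • (|deriv w y| / y)) = C
      rw [Aux18.ae_eq_G hCnn hw 1 le_rfl, Aux18.integral_G 1 C le_rfl _ _ hP hQ]
      norm_num
      ring
    rw [Aux18.polar_int 2 (fun r => |deriv w r| / r), key, Aux18.vol_ball_two, hC,
      nsmul_eq_mul, smul_eq_mul]
    have : (2:ℕ) * (Real.pi * (10 / (7 * Real.pi))) = 20 / 7 := by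
      field_simp
      ring
    rw [this]
    norm_num
  · intro h3
    have hC := hC3 h3
    have hCnn : 0 ≤ C := by rw [hC]; positivity
    have hP : ∀ y : ℝ, HasDerivAt (fun y : ℝ => C * (y ^ 3 - 9 / 16 * y ^ 4))
        (C * (3 * y ^ 2 - 9 / 4 * y ^ (2 + 1))) y := by
      intro y
      have := ((hasDerivAt_pow 3 y).sub
        ((hasDerivAt_pow 4 y).const_mul (9 / 16 : ℝ))).const_mul C
      exact this.congr_deriv (by push_cast; ring)
    have hQ : ∀ y : ℝ, HasDerivAt
        (fun y : ℝ => 3 * C / 4 * (2 * y ^ 2 - 4 / 3 * y ^ 3 + 1 / 4 * y ^ 4))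
        (3 * C / 4 * y ^ (2 - 1) * (2 - y) ^ 2) y := by
      intro y
      have := ((((hasDerivAt_pow 2 y).const_mul (2 : ℝ)).sub
        ((hasDerivAt_pow 3 y).const_mul (4 / 3 : ℝ))).add
        ((hasDerivAt_pow 4 y).const_mul (1 / 4 : ℝ))).const_mul (3 * C / 4)
      exact this.congr_deriv (by push_cast; ring)
    have key : (∫ y in Set.Ioi (0:ℝ), y ^ (3 - 1) • ((fun r => |deriv w r| / r) y))
        = 3 * C / 4 := by
      show (∫ y in Set.Ioi (0:ℝ), y ^ 2 • (|deriv w y| / y)) = 3 * C / 4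
      rw [Aux18.ae_eq_G hCnn hw 2 (by norm_num), Aux18.integral_G 2 C (by norm_num) _ _ hP hQ]
      norm_num
      ring
    rw [Aux18.polar_int 3 (fun r => |deriv w r| / r), key, Aux18.vol_ball_three, hC,
      nsmul_eq_mul, smul_eq_mul]
    have : (3:ℕ) * (4 / 3 * Real.pi * (3 * (1 / Real.pi) / 4)) = 3 := by
      field_simp
      ring
    rw [this]
    norm_num
end
end

section
/- Let d ∈ {2,3} and let w be the quintic B-spline reference weight function on ℝ^d: w(r) = C((3−r)⁵ − 6(2−r)⁵ + 15(1−r)⁵) for 0 ≤ r < 1, w(r) = C((3−r)⁵ − 6(2−r)⁵) for 1 ≤ r < 2, w(r) = C(3−r)⁵ for 2 ≤ r < 3, and w(r) = 0 for r ≥ 3, where C = 7/(478π) if d = 2 and C = 1/(120π) if d = 3. Then (1/2)(∫_{ℝ^d} |ẇ(|y|)| / |y| dy)^{−1} equals 239/924 when d = 2 and equals 1/4 when d = 3. -/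
open MeasureTheory Finset
open scoped BigOperators RealInnerProductSpace

noncomputable section

open ISPH

section VolBall
open Metric

lemma vol_ball2 : (volume (ball (0 : EuclideanSpace ℝ (Fin 2)) 1)).toReal = Real.pi := by
  rw [EuclideanSpace.volume_ball]
  simp [Real.sq_sqrt Real.pi_pos.le]
  rw [show (1:ℝ)+1 = 2 by norm_num, Real.Gamma_two]
  simp [Real.pi_pos.le]

lemma vol_ball3 : (volume (ball (0 : EuclideanSpace ℝ (Fin 3)) 1)).toReal = 4/3*Real.pi := by
  rw [EuclideanSpace.volume_ball]
  have h1 : Real.Gamma ((Fintype.card (Fin 3) : ℝ) / 2 + 1) = 3/4 * Real.sqrt Real.pi := by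
    have : ((Fintype.card (Fin 3):ℕ):ℝ)/2 + 1 = 1/2 + 1 + 1 := by norm_num
    rw [this, Real.Gamma_add_one (by positivity), Real.Gamma_add_one (by norm_num),
      Real.Gamma_one_half_eq]
    ring
  rw [h1]
  have hs : Real.sqrt Real.pi ^ Fintype.card (Fin 3) = Real.pi * Real.sqrt Real.pi := by
    rw [show Fintype.card (Fin 3) = 3 from rfl, pow_succ, sq, Real.mul_self_sqrt Real.pi_pos.le]
  rw [hs]
  have h2 : Real.pi * Real.sqrt Real.pi / (3/4 * Real.sqrt Real.pi) = 4/3*Real.pi := by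
    rw [mul_comm (3/4 : ℝ), ← div_div, mul_div_assoc,
      div_self (Real.sqrt_ne_zero'.2 Real.pi_pos)]
    ring
  rw [h2]
  simp [ENNReal.toReal_ofReal (by positivity : (0:ℝ) ≤ 4/3*Real.pi)]

end VolBall
namespace S19Aux
open MeasureTheory Set

variable {C : ℝ} {w : ℝ → ℝ}
variable (hw : ∀ r : ℝ, 0 ≤ r → w r =
      if r < 1 then C * ((3 - r) ^ 5 - 6 * (2 - r) ^ 5 + 15 * (1 - r) ^ 5)
      else if r < 2 then C * ((3 - r) ^ 5 - 6 * (2 - r) ^ 5)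
      else if r < 3 then C * (3 - r) ^ 5
      else 0)

include hw

lemma d1 {x : ℝ} (hx : x ∈ Set.Ioo (0:ℝ) 1) :
    deriv w x = -(C * (5*(3-x)^4 - 30*(2-x)^4 + 75*(1-x)^4)) := by
  have hev : w =ᶠ[nhds x] (fun y => C * ((3 - y)^5 - 6*(2-y)^5 + 15*(1-y)^5)) := by
    filter_upwards [Ioo_mem_nhds hx.1 hx.2] with y hy
    rw [hw y hy.1.le, if_pos hy.2]
  rw [hev.deriv_eq]
  have h3 : HasDerivAt (fun y:ℝ => (3 - y)^5) ((5:ℝ) * (3-x)^4 * (-1)) x :=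
    ((hasDerivAt_id x).const_sub 3).pow 5
  have h2 : HasDerivAt (fun y:ℝ => (2 - y)^5) ((5:ℝ) * (2-x)^4 * (-1)) x :=
    ((hasDerivAt_id x).const_sub 2).pow 5
  have h1 : HasDerivAt (fun y:ℝ => (1 - y)^5) ((5:ℝ) * (1-x)^4 * (-1)) x :=
    ((hasDerivAt_id x).const_sub 1).pow 5
  have H := (((h3.sub (h2.const_mul 6)).add (h1.const_mul 15)).const_mul C)
  exact H.deriv.trans (by ring)

lemma d2 {x : ℝ} (hx : x ∈ Set.Ioo (1:ℝ) 2) :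
    deriv w x = -(C * (5*(3-x)^4 - 30*(2-x)^4)) := by
  have hev : w =ᶠ[nhds x] (fun y => C * ((3 - y)^5 - 6*(2-y)^5)) := by
    filter_upwards [Ioo_mem_nhds hx.1 hx.2] with y hy
    rw [hw y (by linarith [hy.1]), if_neg (by push_neg; linarith [hy.1]), if_pos hy.2]
  rw [hev.deriv_eq]
  have h3 : HasDerivAt (fun y:ℝ => (3 - y)^5) ((5:ℝ) * (3-x)^4 * (-1)) x :=
    ((hasDerivAt_id x).const_sub 3).pow 5
  have h2 : HasDerivAt (fun y:ℝ => (2 - y)^5) ((5:ℝ) * (2-x)^4 * (-1)) x :=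
    ((hasDerivAt_id x).const_sub 2).pow 5
  have H := ((h3.sub (h2.const_mul 6)).const_mul C)
  exact H.deriv.trans (by ring)

lemma d3 {x : ℝ} (hx : x ∈ Set.Ioo (2:ℝ) 3) :
    deriv w x = -(C * (5*(3-x)^4)) := by
  have hev : w =ᶠ[nhds x] (fun y => C * (3 - y)^5) := by
    filter_upwards [Ioo_mem_nhds hx.1 hx.2] with y hy
    rw [hw y (by linarith [hy.1]), if_neg (by push_neg; linarith [hy.1]),
      if_neg (by push_neg; linarith [hy.1]), if_pos hy.2]
  rw [hev.deriv_eq]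
  have h3 : HasDerivAt (fun y:ℝ => (3 - y)^5) ((5:ℝ) * (3-x)^4 * (-1)) x :=
    ((hasDerivAt_id x).const_sub 3).pow 5
  have H := (h3.const_mul C)
  exact H.deriv.trans (by ring)

lemma d4 {x : ℝ} (hx : x ∈ Set.Ioi (3:ℝ)) : deriv w x = 0 := by
  have hev : w =ᶠ[nhds x] (fun _ => (0:ℝ)) := by
    filter_upwards [Ioi_mem_nhds hx] with y hy
    have hy' : (3:ℝ) < y := hy
    rw [hw y (by linarith), if_neg (by push_neg; linarith), if_neg (by push_neg; linarith),
      if_neg (by push_neg; linarith)]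
  rw [hev.deriv_eq, deriv_const]

lemma key2 (hC : 0 ≤ C) :
    ∫ y in Set.Ioi (0:ℝ), y ^ 1 • (|deriv w y| / y) = C * 66 := by
  set F : ℝ → ℝ := fun y => y ^ 1 • (|deriv w y| / y) with hF
  set g1 : ℝ → ℝ := fun y => C * (5*(3-y)^4 - 30*(2-y)^4 + 75*(1-y)^4) with hg1
  set g2 : ℝ → ℝ := fun y => C * (5*(3-y)^4 - 30*(2-y)^4) with hg2
  set g3 : ℝ → ℝ := fun y => C * (5*(3-y)^4) with hg3
  have hEq1 : EqOn F g1 (Set.Ioo 0 1) := by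
    intro y hy
    simp only [hF, smul_eq_mul, pow_one, hg1]
    rw [d1 hw hy, abs_neg, abs_of_nonneg (mul_nonneg hC (by
      nlinarith [sq_nonneg y, mul_nonneg hy.1.le (sq_nonneg y), sq_nonneg (1-y),
        mul_nonneg hy.1.le (sub_nonneg.2 hy.2.le)])), mul_comm,
      div_mul_cancel₀ _ (ne_of_gt hy.1)]
  have hEq2 : EqOn F g2 (Set.Ioo 1 2) := by
    intro y hy
    simp only [hF, smul_eq_mul, pow_one, hg2]
    rw [d2 hw hy, abs_neg, abs_of_nonneg (mul_nonneg hC (by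
      nlinarith [mul_nonneg (sub_nonneg.2 hy.1.le) (sub_nonneg.2 hy.2.le), sq_nonneg (3-y),
        sq_nonneg (2-y), sq_nonneg ((3-y)*(2-y)), sq_nonneg ((3-y)^2 - 3*(2-y)^2)])), mul_comm,
      div_mul_cancel₀ _ (ne_of_gt (by linarith [hy.1] : (0:ℝ) < y))]
  have hEq3 : EqOn F g3 (Set.Ioo 2 3) := by
    intro y hy
    simp only [hF, smul_eq_mul, pow_one, hg3]
    rw [d3 hw hy, abs_neg, abs_of_nonneg (mul_nonneg hC (by positivity)), mul_comm,
      div_mul_cancel₀ _ (ne_of_gt (by linarith [hy.1] : (0:ℝ) < y))]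
  have hEq4 : EqOn F (fun _ => (0:ℝ)) (Set.Ioi 3) := by
    intro y hy
    simp only [hF, smul_eq_mul, pow_one]
    rw [d4 hw hy]
    simp
  have hc1 : Continuous g1 := by fun_prop
  have hc2 : Continuous g2 := by fun_prop
  have hc3 : Continuous g3 := by fun_prop
  have hint1 : IntegrableOn F (Set.Ioc 0 1) :=
    (((hc1.integrableOn_Ioc.mono_set Ioo_subset_Ioc_self).congr_fun hEq1.symm
      measurableSet_Ioo).congr_set_ae Ioo_ae_eq_Ioc.symm)
  have hint2 : IntegrableOn F (Set.Ioc 1 2) :=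
    (((hc2.integrableOn_Ioc.mono_set Ioo_subset_Ioc_self).congr_fun hEq2.symm
      measurableSet_Ioo).congr_set_ae Ioo_ae_eq_Ioc.symm)
  have hint3 : IntegrableOn F (Set.Ioc 2 3) :=
    (((hc3.integrableOn_Ioc.mono_set Ioo_subset_Ioc_self).congr_fun hEq3.symm
      measurableSet_Ioo).congr_set_ae Ioo_ae_eq_Ioc.symm)
  have hint4 : IntegrableOn F (Set.Ioi 3) :=
    (integrableOn_zero).congr_fun hEq4.symm measurableSet_Ioi
  have hunion : Set.Ioi (0:ℝ) = Set.Ioc 0 1 ∪ (Set.Ioc 1 2 ∪ (Set.Ioc 2 3 ∪ Set.Ioi 3)) := by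
    rw [Set.Ioc_union_Ioi_eq_Ioi (by norm_num : (2:ℝ) ≤ 3),
      Set.Ioc_union_Ioi_eq_Ioi (by norm_num : (1:ℝ) ≤ 2),
      Set.Ioc_union_Ioi_eq_Ioi (by norm_num : (0:ℝ) ≤ 1)]
  have hdisj1 : Disjoint (Set.Ioc (0:ℝ) 1) (Set.Ioc 1 2 ∪ (Set.Ioc 2 3 ∪ Set.Ioi 3)) := by
    rw [Set.disjoint_left]
    rintro a ha hb
    simp only [Set.mem_union, Set.mem_Ioc, Set.mem_Ioi] at ha hb
    rcases hb with h | h | h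
    · linarith [ha.2, h.1]
    · linarith [ha.2, h.1]
    · linarith [ha.2, h]
  have hdisj2 : Disjoint (Set.Ioc (1:ℝ) 2) (Set.Ioc 2 3 ∪ Set.Ioi 3) := by
    rw [Set.disjoint_left]
    rintro a ha hb
    simp only [Set.mem_union, Set.mem_Ioc, Set.mem_Ioi] at ha hb
    rcases hb with h | h
    · linarith [ha.2, h.1]
    · linarith [ha.2, h]
  have hdisj3 : Disjoint (Set.Ioc (2:ℝ) 3) (Set.Ioi (3:ℝ)) := by
    rw [Set.disjoint_left]
    rintro a ha hb
    simp only [Set.mem_Ioc, Set.mem_Ioi] at ha hb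
    linarith [ha.2, hb]
  rw [hunion,
    setIntegral_union hdisj1 (measurableSet_Ioc.union (measurableSet_Ioc.union measurableSet_Ioi))
      hint1 ((hint2.union hint3).union hint4 |>.congr_set_ae (by rw [Set.union_assoc]; exact Filter.EventuallyEq.rfl)),
    setIntegral_union hdisj2 (measurableSet_Ioc.union measurableSet_Ioi) hint2
      (hint3.union hint4),
    setIntegral_union hdisj3 measurableSet_Ioi hint3 hint4]
  have e1 : ∫ y in Set.Ioc (0:ℝ) 1, F y = C * 40 := by
    rw [setIntegral_congr_set Ioo_ae_eq_Ioc.symm, setIntegral_congr_fun measurableSet_Ioo hEq1,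
      setIntegral_congr_set Ioo_ae_eq_Ioc,
      ← intervalIntegral.integral_of_le (by norm_num : (0:ℝ) ≤ 1)]
    have hA : ∀ x ∈ uIcc (0:ℝ) 1,
        HasDerivAt (fun y => C * (-(3-y)^5 + 6*(2-y)^5 - 15*(1-y)^5)) (g1 x) x := by
      intro x _
      have h3 : HasDerivAt (fun y:ℝ => (3 - y)^5) ((5:ℝ)*(3-x)^4*(-1)) x :=
        ((hasDerivAt_id x).const_sub 3).pow 5
      have h2 : HasDerivAt (fun y:ℝ => (2 - y)^5) ((5:ℝ)*(2-x)^4*(-1)) x :=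
        ((hasDerivAt_id x).const_sub 2).pow 5
      have h1 : HasDerivAt (fun y:ℝ => (1 - y)^5) ((5:ℝ)*(1-x)^4*(-1)) x :=
        ((hasDerivAt_id x).const_sub 1).pow 5
      have H := (((h3.neg.add (h2.const_mul 6)).sub (h1.const_mul 15)).const_mul C)
      refine H.congr_deriv ?_
      simp only [hg1]; ring
    rw [intervalIntegral.integral_eq_sub_of_hasDerivAt hA (hc1.intervalIntegrable 0 1)]
    norm_num
    ring
  have e2 : ∫ y in Set.Ioc (1:ℝ) 2, F y = C * 25 := by
    rw [setIntegral_congr_set Ioo_ae_eq_Ioc.symm, setIntegral_congr_fun measurableSet_Ioo hEq2,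
      setIntegral_congr_set Ioo_ae_eq_Ioc,
      ← intervalIntegral.integral_of_le (by norm_num : (1:ℝ) ≤ 2)]
    have hA : ∀ x ∈ uIcc (1:ℝ) 2,
        HasDerivAt (fun y => C * (-(3-y)^5 + 6*(2-y)^5)) (g2 x) x := by
      intro x _
      have h3 : HasDerivAt (fun y:ℝ => (3 - y)^5) ((5:ℝ)*(3-x)^4*(-1)) x :=
        ((hasDerivAt_id x).const_sub 3).pow 5
      have h2 : HasDerivAt (fun y:ℝ => (2 - y)^5) ((5:ℝ)*(2-x)^4*(-1)) x :=
        ((hasDerivAt_id x).const_sub 2).pow 5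
      have H := ((h3.neg.add (h2.const_mul 6)).const_mul C)
      refine H.congr_deriv ?_
      simp only [hg2]; ring
    rw [intervalIntegral.integral_eq_sub_of_hasDerivAt hA (hc2.intervalIntegrable 1 2)]
    norm_num
    ring
  have e3 : ∫ y in Set.Ioc (2:ℝ) 3, F y = C * 1 := by
    rw [setIntegral_congr_set Ioo_ae_eq_Ioc.symm, setIntegral_congr_fun measurableSet_Ioo hEq3,
      setIntegral_congr_set Ioo_ae_eq_Ioc,
      ← intervalIntegral.integral_of_le (by norm_num : (2:ℝ) ≤ 3)]
    have hA : ∀ x ∈ uIcc (2:ℝ) 3,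
        HasDerivAt (fun y => C * (-(3-y)^5)) (g3 x) x := by
      intro x _
      have h3 : HasDerivAt (fun y:ℝ => (3 - y)^5) ((5:ℝ)*(3-x)^4*(-1)) x :=
        ((hasDerivAt_id x).const_sub 3).pow 5
      have H := (h3.neg.const_mul C)
      refine H.congr_deriv ?_
      simp only [hg3]; ring
    rw [intervalIntegral.integral_eq_sub_of_hasDerivAt hA (hc3.intervalIntegrable 2 3)]
    norm_num
  have e4 : ∫ y in Set.Ioi (3:ℝ), F y = 0 := by
    rw [setIntegral_congr_fun measurableSet_Ioi hEq4]
    simp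
  rw [e1, e2, e3, e4]
  ring

lemma key3 (hC : 0 ≤ C) :
    ∫ y in Set.Ioi (0:ℝ), y ^ 2 • (|deriv w y| / y) = C * 60 := by
  set F : ℝ → ℝ := fun y => y ^ 2 • (|deriv w y| / y) with hF
  set g1 : ℝ → ℝ := fun y => C * (y * (5*(3-y)^4 - 30*(2-y)^4 + 75*(1-y)^4)) with hg1
  set g2 : ℝ → ℝ := fun y => C * (y * (5*(3-y)^4 - 30*(2-y)^4)) with hg2
  set g3 : ℝ → ℝ := fun y => C * (y * (5*(3-y)^4)) with hg3
  have hEq1 : EqOn F g1 (Set.Ioo 0 1) := by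
    intro y hy
    have hy0 : y ≠ 0 := ne_of_gt hy.1
    simp only [hF, smul_eq_mul, hg1]
    rw [d1 hw hy, abs_neg, abs_of_nonneg (mul_nonneg hC (by
      nlinarith [sq_nonneg y, mul_nonneg hy.1.le (sq_nonneg y), sq_nonneg (1-y),
        mul_nonneg hy.1.le (sub_nonneg.2 hy.2.le)]))]
    field_simp
  have hEq2 : EqOn F g2 (Set.Ioo 1 2) := by
    intro y hy
    have hy0 : y ≠ 0 := ne_of_gt (by linarith [hy.1] : (0:ℝ) < y)
    simp only [hF, smul_eq_mul, hg2]
    rw [d2 hw hy, abs_neg, abs_of_nonneg (mul_nonneg hC (by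
      nlinarith [mul_nonneg (sub_nonneg.2 hy.1.le) (sub_nonneg.2 hy.2.le), sq_nonneg (3-y),
        sq_nonneg (2-y), sq_nonneg ((3-y)*(2-y)), sq_nonneg ((3-y)^2 - 3*(2-y)^2)]))]
    field_simp
  have hEq3 : EqOn F g3 (Set.Ioo 2 3) := by
    intro y hy
    have hy0 : y ≠ 0 := ne_of_gt (by linarith [hy.1] : (0:ℝ) < y)
    simp only [hF, smul_eq_mul, hg3]
    rw [d3 hw hy, abs_neg, abs_of_nonneg (mul_nonneg hC (by positivity))]
    field_simp
  have hEq4 : EqOn F (fun _ => (0:ℝ)) (Set.Ioi 3) := by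
    intro y hy
    simp only [hF, smul_eq_mul]
    rw [d4 hw hy]
    simp
  have hc1 : Continuous g1 := by fun_prop
  have hc2 : Continuous g2 := by fun_prop
  have hc3 : Continuous g3 := by fun_prop
  have hint1 : IntegrableOn F (Set.Ioc 0 1) :=
    (((hc1.integrableOn_Ioc.mono_set Ioo_subset_Ioc_self).congr_fun hEq1.symm
      measurableSet_Ioo).congr_set_ae Ioo_ae_eq_Ioc.symm)
  have hint2 : IntegrableOn F (Set.Ioc 1 2) :=
    (((hc2.integrableOn_Ioc.mono_set Ioo_subset_Ioc_self).congr_fun hEq2.symm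
      measurableSet_Ioo).congr_set_ae Ioo_ae_eq_Ioc.symm)
  have hint3 : IntegrableOn F (Set.Ioc 2 3) :=
    (((hc3.integrableOn_Ioc.mono_set Ioo_subset_Ioc_self).congr_fun hEq3.symm
      measurableSet_Ioo).congr_set_ae Ioo_ae_eq_Ioc.symm)
  have hint4 : IntegrableOn F (Set.Ioi 3) :=
    (integrableOn_zero).congr_fun hEq4.symm measurableSet_Ioi
  have hunion : Set.Ioi (0:ℝ) = Set.Ioc 0 1 ∪ (Set.Ioc 1 2 ∪ (Set.Ioc 2 3 ∪ Set.Ioi 3)) := by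
    rw [Set.Ioc_union_Ioi_eq_Ioi (by norm_num : (2:ℝ) ≤ 3),
      Set.Ioc_union_Ioi_eq_Ioi (by norm_num : (1:ℝ) ≤ 2),
      Set.Ioc_union_Ioi_eq_Ioi (by norm_num : (0:ℝ) ≤ 1)]
  have hdisj1 : Disjoint (Set.Ioc (0:ℝ) 1) (Set.Ioc 1 2 ∪ (Set.Ioc 2 3 ∪ Set.Ioi 3)) := by
    rw [Set.disjoint_left]
    rintro a ha hb
    simp only [Set.mem_union, Set.mem_Ioc, Set.mem_Ioi] at ha hb
    rcases hb with h | h | h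
    · linarith [ha.2, h.1]
    · linarith [ha.2, h.1]
    · linarith [ha.2, h]
  have hdisj2 : Disjoint (Set.Ioc (1:ℝ) 2) (Set.Ioc 2 3 ∪ Set.Ioi 3) := by
    rw [Set.disjoint_left]
    rintro a ha hb
    simp only [Set.mem_union, Set.mem_Ioc, Set.mem_Ioi] at ha hb
    rcases hb with h | h
    · linarith [ha.2, h.1]
    · linarith [ha.2, h]
  have hdisj3 : Disjoint (Set.Ioc (2:ℝ) 3) (Set.Ioi (3:ℝ)) := by
    rw [Set.disjoint_left]
    rintro a ha hb
    simp only [Set.mem_Ioc, Set.mem_Ioi] at ha hb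
    linarith [ha.2, hb]
  rw [hunion,
    setIntegral_union hdisj1 (measurableSet_Ioc.union (measurableSet_Ioc.union measurableSet_Ioi))
      hint1 ((hint2.union hint3).union hint4 |>.congr_set_ae (by rw [Set.union_assoc]; exact Filter.EventuallyEq.rfl)),
    setIntegral_union hdisj2 (measurableSet_Ioc.union measurableSet_Ioi) hint2
      (hint3.union hint4),
    setIntegral_union hdisj3 measurableSet_Ioi hint3 hint4]
  have e1 : ∫ y in Set.Ioc (0:ℝ) 1, F y = C * (73/3) := by
    rw [setIntegral_congr_set Ioo_ae_eq_Ioc.symm, setIntegral_congr_fun measurableSet_Ioo hEq1,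
      setIntegral_congr_set Ioo_ae_eq_Ioc,
      ← intervalIntegral.integral_of_le (by norm_num : (0:ℝ) ≤ 1)]
    have hA : ∀ x ∈ uIcc (0:ℝ) 1,
        HasDerivAt (fun y => C * (-(y*(3-y)^5) - (3-y)^6/6 + 6*(y*(2-y)^5) + (2-y)^6
          - 15*(y*(1-y)^5) - 15*((1-y)^6/6))) (g1 x) x := by
      intro x _
      have h3 : HasDerivAt (fun y:ℝ => (3 - y)^5) ((5:ℝ)*(3-x)^4*(-1)) x :=
        ((hasDerivAt_id x).const_sub 3).pow 5
      have h2 : HasDerivAt (fun y:ℝ => (2 - y)^5) ((5:ℝ)*(2-x)^4*(-1)) x :=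
        ((hasDerivAt_id x).const_sub 2).pow 5
      have h1 : HasDerivAt (fun y:ℝ => (1 - y)^5) ((5:ℝ)*(1-x)^4*(-1)) x :=
        ((hasDerivAt_id x).const_sub 1).pow 5
      have p63 : HasDerivAt (fun y:ℝ => (3 - y)^6) ((6:ℝ)*(3-x)^5*(-1)) x :=
        ((hasDerivAt_id x).const_sub 3).pow 6
      have p62 : HasDerivAt (fun y:ℝ => (2 - y)^6) ((6:ℝ)*(2-x)^5*(-1)) x :=
        ((hasDerivAt_id x).const_sub 2).pow 6
      have p61 : HasDerivAt (fun y:ℝ => (1 - y)^6) ((6:ℝ)*(1-x)^5*(-1)) x :=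
        ((hasDerivAt_id x).const_sub 1).pow 6
      have m3 := (hasDerivAt_id x).mul h3
      have m2 := (hasDerivAt_id x).mul h2
      have m1 := (hasDerivAt_id x).mul h1
      have H := ((((((m3.neg.sub (p63.div_const 6)).add (m2.const_mul 6)).add p62).sub
        (m1.const_mul 15)).sub ((p61.div_const 6).const_mul 15)).const_mul C)
      refine H.congr_deriv ?_
      simp only [hg1, id_eq]
      ring
    rw [intervalIntegral.integral_eq_sub_of_hasDerivAt hA (hc1.intervalIntegrable 0 1)]
    norm_num
    ring
  have e2 : ∫ y in Set.Ioc (1:ℝ) 2, F y = C * (67/2) := by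
    rw [setIntegral_congr_set Ioo_ae_eq_Ioc.symm, setIntegral_congr_fun measurableSet_Ioo hEq2,
      setIntegral_congr_set Ioo_ae_eq_Ioc,
      ← intervalIntegral.integral_of_le (by norm_num : (1:ℝ) ≤ 2)]
    have hA : ∀ x ∈ uIcc (1:ℝ) 2,
        HasDerivAt (fun y => C * (-(y*(3-y)^5) - (3-y)^6/6 + 6*(y*(2-y)^5) + (2-y)^6))
          (g2 x) x := by
      intro x _
      have h3 : HasDerivAt (fun y:ℝ => (3 - y)^5) ((5:ℝ)*(3-x)^4*(-1)) x :=
        ((hasDerivAt_id x).const_sub 3).pow 5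
      have h2 : HasDerivAt (fun y:ℝ => (2 - y)^5) ((5:ℝ)*(2-x)^4*(-1)) x :=
        ((hasDerivAt_id x).const_sub 2).pow 5
      have p63 : HasDerivAt (fun y:ℝ => (3 - y)^6) ((6:ℝ)*(3-x)^5*(-1)) x :=
        ((hasDerivAt_id x).const_sub 3).pow 6
      have p62 : HasDerivAt (fun y:ℝ => (2 - y)^6) ((6:ℝ)*(2-x)^5*(-1)) x :=
        ((hasDerivAt_id x).const_sub 2).pow 6
      have m3 := (hasDerivAt_id x).mul h3
      have m2 := (hasDerivAt_id x).mul h2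
      have H := ((((m3.neg.sub (p63.div_const 6)).add (m2.const_mul 6)).add p62).const_mul C)
      refine H.congr_deriv ?_
      simp only [hg2, id_eq]
      ring
    rw [intervalIntegral.integral_eq_sub_of_hasDerivAt hA (hc2.intervalIntegrable 1 2)]
    norm_num
    ring
  have e3 : ∫ y in Set.Ioc (2:ℝ) 3, F y = C * (13/6) := by
    rw [setIntegral_congr_set Ioo_ae_eq_Ioc.symm, setIntegral_congr_fun measurableSet_Ioo hEq3,
      setIntegral_congr_set Ioo_ae_eq_Ioc,
      ← intervalIntegral.integral_of_le (by norm_num : (2:ℝ) ≤ 3)]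
    have hA : ∀ x ∈ uIcc (2:ℝ) 3,
        HasDerivAt (fun y => C * (-(y*(3-y)^5) - (3-y)^6/6)) (g3 x) x := by
      intro x _
      have h3 : HasDerivAt (fun y:ℝ => (3 - y)^5) ((5:ℝ)*(3-x)^4*(-1)) x :=
        ((hasDerivAt_id x).const_sub 3).pow 5
      have p63 : HasDerivAt (fun y:ℝ => (3 - y)^6) ((6:ℝ)*(3-x)^5*(-1)) x :=
        ((hasDerivAt_id x).const_sub 3).pow 6
      have m3 := (hasDerivAt_id x).mul h3
      have H := ((m3.neg.sub (p63.div_const 6)).const_mul C)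
      refine H.congr_deriv ?_
      simp only [hg3, id_eq]
      ring
    rw [intervalIntegral.integral_eq_sub_of_hasDerivAt hA (hc3.intervalIntegrable 2 3)]
    norm_num
  have e4 : ∫ y in Set.Ioi (3:ℝ), F y = 0 := by
    rw [setIntegral_congr_fun measurableSet_Ioi hEq4]
    simp
  rw [e1, e2, e3, e4]
  ring

end S19Aux


/-- the continuum time-step coefficient of the quintic B-spline
reference weight function is `239/924` in dimension 2 and `1/4` in dimension 3. -/
theorem statement19 (d : ℕ) (hd : d = 2 ∨ d = 3) (C : ℝ)
    (hC2 : d = 2 → C = 7 / (478 * Real.pi))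
    (hC3 : d = 3 → C = 1 / (120 * Real.pi))
    (w : ℝ → ℝ)
    (hw : ∀ r : ℝ, 0 ≤ r → w r =
      if r < 1 then C * ((3 - r) ^ 5 - 6 * (2 - r) ^ 5 + 15 * (1 - r) ^ 5)
      else if r < 2 then C * ((3 - r) ^ 5 - 6 * (2 - r) ^ 5)
      else if r < 3 then C * (3 - r) ^ 5
      else 0) :
    (d = 2 → (1 / 2) * (∫ y : Pt 2, |deriv w ‖y‖| / ‖y‖)⁻¹ = 239 / 924) ∧
    (d = 3 → (1 / 2) * (∫ y : Pt 3, |deriv w ‖y‖| / ‖y‖)⁻¹ = 1 / 4) := by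
  constructor
  · intro h2
    have hC : C = 7 / (478 * Real.pi) := hC2 h2
    have hC0 : 0 ≤ C := by rw [hC]; positivity
    have hint2 : (∫ y : Pt 2, |deriv w ‖y‖| / ‖y‖) =
        2 • (volume (Metric.ball (0 : Pt 2) 1)).toReal •
          ∫ y in Set.Ioi (0:ℝ), y ^ 1 • (|deriv w y| / y) := by
      have hint := MeasureTheory.integral_fun_norm_addHaar (volume : Measure (Pt 2))
        (fun r => |deriv w r| / r)
      simp only [finrank_euclideanSpace, Fintype.card_fin] at hint
      norm_num at hint ⊢
      rw [hint, measureReal_def, vol_ball2, ENNReal.toReal_ofReal Real.pi_pos.le]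
    rw [hint2, S19Aux.key2 hw hC0, vol_ball2, hC]
    have hπ : Real.pi ≠ 0 := Real.pi_ne_zero
    simp only [smul_eq_mul, nsmul_eq_mul, Nat.cast_ofNat]
    rw [show (2:ℝ) * (Real.pi * (7 / (478 * Real.pi) * 66)) = 462/239 by
      field_simp; ring]
    norm_num
  · intro h3
    have hC : C = 1 / (120 * Real.pi) := hC3 h3
    have hC0 : 0 ≤ C := by rw [hC]; positivity
    have hint2 : (∫ y : Pt 3, |deriv w ‖y‖| / ‖y‖) =
        3 • (volume (Metric.ball (0 : Pt 3) 1)).toReal •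
          ∫ y in Set.Ioi (0:ℝ), y ^ 2 • (|deriv w y| / y) := by
      have hint := MeasureTheory.integral_fun_norm_addHaar (volume : Measure (Pt 3))
        (fun r => |deriv w r| / r)
      simp only [finrank_euclideanSpace, Fintype.card_fin] at hint
      norm_num at hint ⊢
      rw [hint, measureReal_def, vol_ball3, ENNReal.toReal_ofReal (by positivity)]
      ring
    rw [hint2, S19Aux.key3 hw hC0, vol_ball3, hC]
    have hπ : Real.pi ≠ 0 := Real.pi_ne_zero
    simp only [smul_eq_mul, nsmul_eq_mul, Nat.cast_ofNat]
    rw [show (3:ℝ) * (4/3*Real.pi * (1 / (120 * Real.pi) * 60)) = 2 by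
      field_simp; ring]
    norm_num
end
end
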